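/- arXiv:1711.10118 — 7 statements merged into one kernel-verified Lean document; each statement's English description precedes it below -/
import Mathlib

section
/- Let d ≥ 1. Let a₀(d), a₁(d), a₂(d), a₃(d) ∈ ℚ be the coefficients of 1, h, h², h³ in the power-series expansion at h = 0 of A_d(h) = ∏_{k=1}^{5d}(5h+k) / ∏_{k=1}^{d}(h+k)⁵, and let b₀(d), b₁(d), b₂(d), b₃(d) ∈ ℚ be the coefficients of 1, x, x², x³ in the power-series expansion at x = 0 of B_d(x) = ∏_{k=1}^{5d}(−5x + (k/d)(x+1)) / ∏_{k=1}^{d}(x − (k/d)(x+1))⁵. Then b₀(d) = (−1)^d a₀(d), b₁(d) = (−1)^{d+1} d·a₁(d), b₂(d) = (−1)^d (d²·a₂(d) + d·a₁(d)), and b₃(d) = (−1)^{d+1}(d³·a₃(d) + 2d²·a₂(d) + d·a₁(d)). Equivalently, substituting x = −h·(1+h)^{−1} into B_d gives B_d(−h(1+h)^{−1}) ≡ (−1)^d·A_d(dh) modulo h⁴. -/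
open PowerSeries Finset

noncomputable def Vg (e : ℚ) : PowerSeries ℚ :=
  X * PowerSeries.mk (fun n => (-1 : ℚ)^(n+1) * e)

lemma coeff_Vg_zero (e : ℚ) : coeff 0 (Vg e) = 0 := by
  simp [Vg, coeff_zero_eq_constantCoeff]

lemma coeff_Vg_succ (e : ℚ) (n : ℕ) : coeff (n+1) (Vg e) = (-1:ℚ)^(n+1) * e := by
  simp [Vg, coeff_succ_X_mul]

lemma one_add_X_mul_Vg (e : ℚ) : (1 + X) * Vg e = -(C e * X) := by
  ext n
  rw [add_mul, one_mul, map_add]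
  match n with
  | 0 => simp [coeff_Vg_zero, coeff_zero_eq_constantCoeff]
  | 1 => simp [coeff_Vg_succ, coeff_Vg_zero, coeff_succ_X_mul]
  | (n+2) =>
    rw [coeff_succ_X_mul, coeff_Vg_succ, coeff_Vg_succ]
    simp [pow_succ, coeff_X]

lemma X_dvd_Vg (e : ℚ) : (X : PowerSeries ℚ) ∣ Vg e := Dvd.intro _ rfl

lemma coeff_Vg_pow_zero (e : ℚ) {i j : ℕ} (h : j < i) : coeff j (Vg e ^ i) = 0 := by
  have hdvd : (X : PowerSeries ℚ)^i ∣ Vg e ^ i := pow_dvd_pow_of_dvd (X_dvd_Vg e) i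
  exact (X_pow_dvd_iff.mp hdvd) j h

lemma cm0 (f g : PowerSeries ℚ) : coeff 0 (f*g) = coeff 0 f * coeff 0 g := by
  simp [coeff_mul]

lemma cm1 (f g : PowerSeries ℚ) :
    coeff 1 (f*g) = coeff 0 f * coeff 1 g + coeff 1 f * coeff 0 g := by
  rw [coeff_mul, Finset.Nat.sum_antidiagonal_eq_sum_range_succ_mk]
  simp [Finset.sum_range_succ]

lemma cm2 (f g : PowerSeries ℚ) :
    coeff 2 (f*g) = coeff 0 f * coeff 2 g + coeff 1 f * coeff 1 g
      + coeff 2 f * coeff 0 g := by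
  rw [coeff_mul, Finset.Nat.sum_antidiagonal_eq_sum_range_succ_mk]
  rw [Finset.sum_range_succ, Finset.sum_range_succ, Finset.sum_range_succ, Finset.sum_range_zero]
  norm_num

lemma cm3 (f g : PowerSeries ℚ) :
    coeff 3 (f*g) = coeff 0 f * coeff 3 g + coeff 1 f * coeff 2 g
      + coeff 2 f * coeff 1 g + coeff 3 f * coeff 0 g := by
  rw [coeff_mul, Finset.Nat.sum_antidiagonal_eq_sum_range_succ_mk]
  rw [Finset.sum_range_succ, Finset.sum_range_succ, Finset.sum_range_succ,
    Finset.sum_range_succ, Finset.sum_range_zero]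
  norm_num

lemma coeff_Vg_sq_two (e : ℚ) : coeff 2 (Vg e ^ 2) = e^2 := by
  rw [pow_two, cm2]
  simp [coeff_Vg_zero, coeff_Vg_succ]
  ring

lemma coeff_Vg_sq_three (e : ℚ) : coeff 3 (Vg e ^ 2) = -(2*e^2) := by
  rw [pow_two, cm3]
  simp [coeff_Vg_zero, coeff_Vg_succ]
  ring

lemma coeff_Vg_cube_three (e : ℚ) : coeff 3 (Vg e ^ 3) = -(e^3) := by
  rw [pow_succ, cm3]
  rw [coeff_Vg_pow_zero e (by norm_num : (0:ℕ) < 2),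
    coeff_Vg_pow_zero e (by norm_num : (1:ℕ) < 2),
    coeff_Vg_sq_two, coeff_Vg_sq_three]
  simp [coeff_Vg_zero, coeff_Vg_succ]
  ring

lemma algQ (x : ℚ) : algebraMap ℚ (PowerSeries ℚ) x = C x := by
  rw [PowerSeries.algebraMap_apply]; simp

lemma aeval_X_coe (r : Polynomial ℚ) :
    Polynomial.aeval (X : PowerSeries ℚ) r = (r : PowerSeries ℚ) := by
  rw [Polynomial.aeval_def, ← Polynomial.eval₂_C_X_eq_coe]
  congr 1

lemma coeff_aeval_X (r : Polynomial ℚ) (n : ℕ) :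
    coeff n (Polynomial.aeval (X : PowerSeries ℚ) r) = r.coeff n := by
  rw [aeval_X_coe, Polynomial.coeff_coe]

lemma coeff_aeval_Vg (e : ℚ) (r : Polynomial ℚ) :
    coeff 0 (Polynomial.aeval (Vg e) r) = r.coeff 0 ∧
    coeff 1 (Polynomial.aeval (Vg e) r) = -(e * r.coeff 1) ∧
    coeff 2 (Polynomial.aeval (Vg e) r) = e * r.coeff 1 + e^2 * r.coeff 2 ∧
    coeff 3 (Polynomial.aeval (Vg e) r) =
      -(e * r.coeff 1) - 2*e^2 * r.coeff 2 - e^3 * r.coeff 3 := by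
  induction r using Polynomial.induction_on' with
  | add p q hp hq =>
    obtain ⟨hp0, hp1, hp2, hp3⟩ := hp
    obtain ⟨hq0, hq1, hq2, hq3⟩ := hq
    refine ⟨?_, ?_, ?_, ?_⟩ <;>
      simp only [map_add, Polynomial.coeff_add, hp0, hp1, hp2, hp3, hq0, hq1, hq2, hq3] <;> ring
  | monomial i c =>
    have hm : Polynomial.aeval (Vg e) (Polynomial.monomial i c) = C c * Vg e ^ i := by
      rw [Polynomial.aeval_monomial, algQ]
    match i with
    | 0 =>
      refine ⟨?_, ?_, ?_, ?_⟩ <;>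
        simp [hm, Polynomial.coeff_monomial, coeff_zero_eq_constantCoeff, algQ, coeff_C]
    | 1 =>
      refine ⟨?_, ?_, ?_, ?_⟩ <;>
        simp [hm, Polynomial.coeff_monomial, coeff_C_mul, coeff_Vg_zero, coeff_Vg_succ,
          coeff_zero_eq_constantCoeff] <;> ring
    | 2 =>
      refine ⟨?_, ?_, ?_, ?_⟩ <;>
        simp [hm, Polynomial.coeff_monomial, coeff_C_mul,
          coeff_Vg_pow_zero e (by norm_num : (0:ℕ) < 2),
          coeff_Vg_pow_zero e (by norm_num : (1:ℕ) < 2),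
          coeff_Vg_sq_two, coeff_Vg_sq_three, coeff_zero_eq_constantCoeff] <;> ring
    | 3 =>
      refine ⟨?_, ?_, ?_, ?_⟩ <;>
        simp [hm, Polynomial.coeff_monomial, coeff_C_mul,
          coeff_Vg_pow_zero e (by norm_num : (0:ℕ) < 3),
          coeff_Vg_pow_zero e (by norm_num : (1:ℕ) < 3),
          coeff_Vg_pow_zero e (by norm_num : (2:ℕ) < 3),
          coeff_Vg_cube_three, coeff_zero_eq_constantCoeff] <;> ring
    | (i+4) =>
      refine ⟨?_, ?_, ?_, ?_⟩ <;>
        simp [hm, Polynomial.coeff_monomial, coeff_C_mul,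
          coeff_Vg_pow_zero e (by omega : (0:ℕ) < i+4),
          coeff_Vg_pow_zero e (by omega : (1:ℕ) < i+4),
          coeff_Vg_pow_zero e (by omega : (2:ℕ) < i+4),
          coeff_Vg_pow_zero e (by omega : (3:ℕ) < i+4),
          coeff_zero_eq_constantCoeff, Nat.add_eq_zero] <;>
        intro h <;> omega

lemma solve_system (e G0 G1 G2 G3 P0 P1 P2 P3 a0 a1 a2 a3 s0 s1 s2 s3 : ℚ)
    (hG0 : G0 ≠ 0)
    (e0 : a0*G0 = P0)
    (e1 : a0*G1 + a1*G0 = P1)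
    (e2 : a0*G2 + a1*G1 + a2*G0 = P2)
    (e3 : a0*G3 + a1*G2 + a2*G1 + a3*G0 = P3)
    (f0 : s0*G0 = P0)
    (f1 : s0*(-(e*G1)) + s1*G0 = -(e*P1))
    (f2 : s0*(e*G1 + e^2*G2) + s1*(-(e*G1)) + s2*G0 = e*P1 + e^2*P2)
    (f3 : s0*(-(e*G1) - 2*e^2*G2 - e^3*G3) + s1*(e*G1 + e^2*G2) + s2*(-(e*G1)) + s3*G0
        = -(e*P1) - 2*e^2*P2 - e^3*P3) :
    s0 = a0 ∧ s1 = -(e*a1) ∧ s2 = e*a1 + e^2*a2 ∧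
      s3 = -(e*a1) - 2*e^2*a2 - e^3*a3 := by
  have h0 : s0 = a0 := mul_right_cancel₀ hG0 (f0.trans e0.symm)
  subst h0
  have h1 : s1 = -(e*a1) := by
    apply mul_right_cancel₀ hG0
    linear_combination f1 + e*e1
  subst h1
  have h2 : s2 = e*a1 + e^2*a2 := by
    apply mul_right_cancel₀ hG0
    linear_combination f2 - e*e1 - e^2*e2
  subst h2
  have h3 : s3 = -(e*a1) - 2*e^2*a2 - e^3*a3 := by
    apply mul_right_cancel₀ hG0
    linear_combination f3 + e*e1 + 2*e^2*e2 + e^3*e3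
  exact ⟨rfl, rfl, rfl, h3⟩

set_option maxHeartbeats 1000000 in
/-- Relation between the low-order expansion coefficients of
`A_d(h) = ∏_{k=1}^{5d}(5h+k) / ∏_{k=1}^{d}(h+k)^5` and
`B_d(x) = ∏_{k=1}^{5d}(−5x + (k/d)(x+1)) / ∏_{k=1}^{d}(x − (k/d)(x+1))^5`. -/
theorem stmt_0 (d : ℕ) (hd : 1 ≤ d)
    (A B : PowerSeries ℚ)
    (hA : A = (∏ k ∈ Finset.Icc 1 (5 * d), ((5 : PowerSeries ℚ) * X + C (k : ℚ))) *
        ((∏ k ∈ Finset.Icc 1 d, (X + C (k : ℚ)))⁻¹) ^ 5)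
    (hB : B = (∏ k ∈ Finset.Icc 1 (5 * d),
          ((-5 : PowerSeries ℚ) * X + C ((k : ℚ) / (d : ℚ)) * (X + 1))) *
        ((∏ k ∈ Finset.Icc 1 d, (X - C ((k : ℚ) / (d : ℚ)) * (X + 1)))⁻¹) ^ 5) :
    coeff 0 B = (-1 : ℚ) ^ d * coeff 0 A ∧
    coeff 1 B = (-1 : ℚ) ^ (d + 1) * (d : ℚ) * coeff 1 A ∧
    coeff 2 B = (-1 : ℚ) ^ d * ((d : ℚ) ^ 2 * coeff 2 A + (d : ℚ) * coeff 1 A) ∧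
    coeff 3 B = (-1 : ℚ) ^ (d + 1) *
      ((d : ℚ) ^ 3 * coeff 3 A + 2 * (d : ℚ) ^ 2 * coeff 2 A + (d : ℚ) * coeff 1 A) := by
  classical
  have hd0 : (d : ℚ) ≠ 0 := Nat.cast_ne_zero.mpr (by omega)
  set e : ℚ := (d : ℚ) with he'
  -- the polynomials
  set p : Polynomial ℚ :=
    ∏ k ∈ Finset.Icc 1 (5 * d), (5 * Polynomial.X + Polynomial.C (k : ℚ)) with hp
  set q : Polynomial ℚ :=
    ∏ k ∈ Finset.Icc 1 d, (Polynomial.X + Polynomial.C (k : ℚ)) with hq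
  -- A side as aeval images
  have hPA : (∏ k ∈ Finset.Icc 1 (5 * d), ((5 : PowerSeries ℚ) * X + C (k : ℚ)))
      = Polynomial.aeval (X : PowerSeries ℚ) p := by
    rw [hp, map_prod]
    refine Finset.prod_congr rfl fun k _ => ?_
    simp [algQ, map_ofNat]
  have hQA : (∏ k ∈ Finset.Icc 1 d, ((X : PowerSeries ℚ) + C (k : ℚ)))
      = Polynomial.aeval (X : PowerSeries ℚ) q := by
    rw [hq, map_prod]
    refine Finset.prod_congr rfl fun k _ => ?_
    simp [algQ, map_ofNat]
  have hq0 : q.coeff 0 ≠ 0 := by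
    have hval : q.coeff 0 = ∏ k ∈ Finset.Icc 1 d, (k : ℚ) := by
      rw [hq, ← Polynomial.constantCoeff_apply, map_prod]
      refine Finset.prod_congr rfl fun k _ => ?_
      simp [Polynomial.constantCoeff_apply]
    rw [hval]
    rw [Finset.prod_ne_zero_iff]
    intro k hk
    have : 1 ≤ k := (Finset.mem_Icc.mp hk).1
    exact Nat.cast_ne_zero.mpr (by omega)
  have hq50 : (q ^ 5).coeff 0 ≠ 0 := by
    have : (q ^ 5).coeff 0 = (q.coeff 0) ^ 5 := by
      rw [← Polynomial.constantCoeff_apply, map_pow, Polynomial.constantCoeff_apply]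
    rw [this]
    exact pow_ne_zero _ hq0
  have hcq : constantCoeff (Polynomial.aeval (X : PowerSeries ℚ) q) ≠ 0 := by
    rw [← coeff_zero_eq_constantCoeff_apply, coeff_aeval_X]
    exact hq0
  have hA4 : A * Polynomial.aeval (X : PowerSeries ℚ) (q ^ 5)
      = Polynomial.aeval (X : PowerSeries ℚ) p := by
    rw [hA, hPA, hQA, map_pow]
    calc Polynomial.aeval (X : PowerSeries ℚ) p
          * ((Polynomial.aeval (X : PowerSeries ℚ) q)⁻¹) ^ 5
          * (Polynomial.aeval (X : PowerSeries ℚ) q) ^ 5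
        = Polynomial.aeval (X : PowerSeries ℚ) p
          * ((Polynomial.aeval (X : PowerSeries ℚ) q)⁻¹
              * Polynomial.aeval (X : PowerSeries ℚ) q) ^ 5 := by
          rw [mul_pow]; ring
      _ = Polynomial.aeval (X : PowerSeries ℚ) p := by
          rw [PowerSeries.inv_mul_cancel _ hcq]; simp
  -- B side
  set BN : PowerSeries ℚ := ∏ k ∈ Finset.Icc 1 (5 * d),
      ((-5 : PowerSeries ℚ) * X + C ((k : ℚ) / e) * (X + 1)) with hBN
  set BD : PowerSeries ℚ := ∏ k ∈ Finset.Icc 1 d,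
      ((X : PowerSeries ℚ) - C ((k : ℚ) / e) * (X + 1)) with hBD
  have hBD0 : constantCoeff BD ≠ 0 := by
    rw [hBD, map_prod, Finset.prod_ne_zero_iff]
    intro k hk
    have h1 : 1 ≤ k := (Finset.mem_Icc.mp hk).1
    have hk0 : (k : ℚ) ≠ 0 := Nat.cast_ne_zero.mpr (by omega)
    simp only [map_sub, map_mul, map_add, constantCoeff_X, constantCoeff_C, constantCoeff_one]
    simpa using div_ne_zero hk0 hd0
  have hBcross : B * BD ^ 5 = BN := by
    rw [hB]
    calc BN * (BD⁻¹) ^ 5 * BD ^ 5 = BN * (BD⁻¹ * BD) ^ 5 := by rw [mul_pow]; ring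
      _ = BN := by rw [PowerSeries.inv_mul_cancel _ hBD0]; simp
  have hcard : (Finset.Icc 1 d).card = d := by simp
  have hcard5 : (Finset.Icc 1 (5 * d)).card = 5 * d := by simp
  have h1V := one_add_X_mul_Vg e
  have hden : (C e) ^ d * BD
      = (-1 : PowerSeries ℚ) ^ d * ((1 + X) ^ d * Polynomial.aeval (Vg e) q) := by
    calc (C e) ^ d * BD
        = ∏ k ∈ Finset.Icc 1 d, (C e * ((X : PowerSeries ℚ) - C ((k:ℚ)/e) * (X+1))) := by
          rw [hBD, Finset.prod_mul_distrib, Finset.prod_const, hcard]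
      _ = ∏ k ∈ Finset.Icc 1 d, ((-1 : PowerSeries ℚ) * ((1 + X) * (Vg e + C (k : ℚ)))) := by
          refine Finset.prod_congr rfl fun k _ => ?_
          have h2 : C e * C ((k:ℚ)/e) = C (k:ℚ) := by
            rw [← map_mul]; congr 1; field_simp
          rw [neg_one_mul]
          linear_combination h1V - ((X : PowerSeries ℚ) + 1) * h2
      _ = (-1 : PowerSeries ℚ) ^ d * ((1 + X) ^ d
            * ∏ k ∈ Finset.Icc 1 d, (Vg e + C (k : ℚ))) := by
          rw [Finset.prod_mul_distrib, Finset.prod_mul_distrib, Finset.prod_const,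
            Finset.prod_const, hcard]
      _ = (-1 : PowerSeries ℚ) ^ d * ((1 + X) ^ d * Polynomial.aeval (Vg e) q) := by
          rw [hq, map_prod]
          refine congrArg _ (congrArg _ (Finset.prod_congr rfl fun k _ => ?_))
          simp [algQ, map_ofNat]
  have hnum : (C e) ^ (5 * d) * BN = (1 + X) ^ (5 * d) * Polynomial.aeval (Vg e) p := by
    calc (C e) ^ (5 * d) * BN
        = ∏ k ∈ Finset.Icc 1 (5 * d),
            (C e * ((-5 : PowerSeries ℚ) * X + C ((k:ℚ)/e) * (X+1))) := by
          rw [hBN, Finset.prod_mul_distrib, Finset.prod_const, hcard5]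
      _ = ∏ k ∈ Finset.Icc 1 (5 * d), ((1 + X) * (5 * Vg e + C (k : ℚ))) := by
          refine Finset.prod_congr rfl fun k _ => ?_
          have h2 : C e * C ((k:ℚ)/e) = C (k:ℚ) := by
            rw [← map_mul]; congr 1; field_simp
          linear_combination (-5 : PowerSeries ℚ) * h1V + ((X : PowerSeries ℚ) + 1) * h2
      _ = (1 + X) ^ (5 * d) * ∏ k ∈ Finset.Icc 1 (5 * d), (5 * Vg e + C (k : ℚ)) := by
          rw [Finset.prod_mul_distrib, Finset.prod_const, hcard5]
      _ = (1 + X) ^ (5 * d) * Polynomial.aeval (Vg e) p := by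
          rw [hp, map_prod]
          refine congrArg _ (Finset.prod_congr rfl fun k _ => ?_)
          simp [algQ, map_ofNat]
  have hWne : (1 + X : PowerSeries ℚ) ≠ 0 := by
    intro h
    have := congrArg (constantCoeff) h
    simp at this
  have h6 : ((-1 : PowerSeries ℚ) ^ d) * ((-1 : PowerSeries ℚ) ^ d) ^ 5 = 1 := by
    have : ((-1 : PowerSeries ℚ) ^ d) * ((-1 : PowerSeries ℚ) ^ d) ^ 5
        = ((-1 : PowerSeries ℚ) ^ (d * 6)) := by
      rw [pow_mul]; ring
    rw [this]
    exact Even.neg_one_pow ⟨d * 3, by ring⟩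
  have E2 : ((-1 : PowerSeries ℚ) ^ d) ^ 5 * ((1 + X) ^ (5 * d)
        * (B * (Polynomial.aeval (Vg e) q) ^ 5))
      = (1 + X) ^ (5 * d) * Polynomial.aeval (Vg e) p := by
    calc ((-1 : PowerSeries ℚ) ^ d) ^ 5 * ((1 + X) ^ (5 * d)
          * (B * (Polynomial.aeval (Vg e) q) ^ 5))
        = B * ((-1 : PowerSeries ℚ) ^ d * ((1 + X) ^ d * Polynomial.aeval (Vg e) q)) ^ 5 := by
          rw [mul_pow, mul_pow, ← pow_mul, Nat.mul_comm d 5]; ring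
      _ = B * ((C e) ^ d * BD) ^ 5 := by rw [hden]
      _ = (C e) ^ (5 * d) * (B * BD ^ 5) := by
          rw [mul_pow, ← pow_mul, Nat.mul_comm d 5]; ring
      _ = (C e) ^ (5 * d) * BN := by rw [hBcross]
      _ = (1 + X) ^ (5 * d) * Polynomial.aeval (Vg e) p := hnum
  have E3 : (1 + X) ^ (5 * d) * (B * Polynomial.aeval (Vg e) (q ^ 5))
      = (1 + X) ^ (5 * d) * ((-1 : PowerSeries ℚ) ^ d * Polynomial.aeval (Vg e) p) := by
    rw [map_pow]
    linear_combination ((-1 : PowerSeries ℚ) ^ d) * E2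
      - ((1 + X) ^ (5 * d) * B * (Polynomial.aeval (Vg e) q) ^ 5) * h6
  have E4 : B * Polynomial.aeval (Vg e) (q ^ 5)
      = (-1 : PowerSeries ℚ) ^ d * Polynomial.aeval (Vg e) p :=
    mul_left_cancel₀ (pow_ne_zero _ hWne) E3
  -- coefficient extraction
  obtain ⟨LP0, LP1, LP2, LP3⟩ := coeff_aeval_Vg e p
  obtain ⟨LQ0, LQ1, LQ2, LQ3⟩ := coeff_aeval_Vg e (q ^ 5)
  have hC1 : ((-1 : PowerSeries ℚ)) ^ d = C ((-1 : ℚ) ^ d) := by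
    rw [map_pow, map_neg, map_one]
  have eA0 : coeff 0 A * (q^5).coeff 0 = p.coeff 0 := by
    have h := congrArg (coeff 0) hA4
    rwa [cm0, coeff_aeval_X, coeff_aeval_X] at h
  have eA1 : coeff 0 A * (q^5).coeff 1 + coeff 1 A * (q^5).coeff 0 = p.coeff 1 := by
    have h := congrArg (coeff 1) hA4
    rwa [cm1, coeff_aeval_X, coeff_aeval_X, coeff_aeval_X] at h
  have eA2 : coeff 0 A * (q^5).coeff 2 + coeff 1 A * (q^5).coeff 1
      + coeff 2 A * (q^5).coeff 0 = p.coeff 2 := by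
    have h := congrArg (coeff 2) hA4
    rwa [cm2, coeff_aeval_X, coeff_aeval_X, coeff_aeval_X, coeff_aeval_X] at h
  have eA3 : coeff 0 A * (q^5).coeff 3 + coeff 1 A * (q^5).coeff 2
      + coeff 2 A * (q^5).coeff 1 + coeff 3 A * (q^5).coeff 0 = p.coeff 3 := by
    have h := congrArg (coeff 3) hA4
    rwa [cm3, coeff_aeval_X, coeff_aeval_X, coeff_aeval_X, coeff_aeval_X, coeff_aeval_X] at h
  have eB0 : coeff 0 B * (q^5).coeff 0 = (-1:ℚ)^d * p.coeff 0 := by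
    have h := congrArg (coeff 0) E4
    rwa [cm0, LQ0, hC1, coeff_C_mul, LP0] at h
  have eB1 : coeff 0 B * (-(e * (q^5).coeff 1)) + coeff 1 B * (q^5).coeff 0
      = (-1:ℚ)^d * (-(e * p.coeff 1)) := by
    have h := congrArg (coeff 1) E4
    rwa [cm1, LQ0, LQ1, hC1, coeff_C_mul, LP1] at h
  have eB2 : coeff 0 B * (e * (q^5).coeff 1 + e^2 * (q^5).coeff 2)
      + coeff 1 B * (-(e * (q^5).coeff 1)) + coeff 2 B * (q^5).coeff 0
      = (-1:ℚ)^d * (e * p.coeff 1 + e^2 * p.coeff 2) := by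
    have h := congrArg (coeff 2) E4
    rwa [cm2, LQ0, LQ1, LQ2, hC1, coeff_C_mul, LP2] at h
  have eB3 : coeff 0 B * (-(e * (q^5).coeff 1) - 2*e^2 * (q^5).coeff 2 - e^3 * (q^5).coeff 3)
      + coeff 1 B * (e * (q^5).coeff 1 + e^2 * (q^5).coeff 2)
      + coeff 2 B * (-(e * (q^5).coeff 1)) + coeff 3 B * (q^5).coeff 0
      = (-1:ℚ)^d * (-(e * p.coeff 1) - 2*e^2 * p.coeff 2 - e^3 * p.coeff 3) := by
    have h := congrArg (coeff 3) E4
    rwa [cm3, LQ0, LQ1, LQ2, LQ3, hC1, coeff_C_mul, LP3] at h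
  -- solve
  set ε : ℚ := (-1 : ℚ) ^ d with hε
  have hεε : ε * ε = 1 := by
    rw [hε, ← pow_add]
    exact Even.neg_one_pow ⟨d, rfl⟩
  have f0 : (ε * coeff 0 B) * (q^5).coeff 0 = p.coeff 0 := by
    linear_combination ε * eB0 + p.coeff 0 * hεε
  have f1 : (ε * coeff 0 B) * (-(e * (q^5).coeff 1)) + (ε * coeff 1 B) * (q^5).coeff 0
      = -(e * p.coeff 1) := by
    linear_combination ε * eB1 + (-(e * p.coeff 1)) * hεε
  have f2 : (ε * coeff 0 B) * (e * (q^5).coeff 1 + e^2 * (q^5).coeff 2)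
      + (ε * coeff 1 B) * (-(e * (q^5).coeff 1)) + (ε * coeff 2 B) * (q^5).coeff 0
      = e * p.coeff 1 + e^2 * p.coeff 2 := by
    linear_combination ε * eB2 + (e * p.coeff 1 + e^2 * p.coeff 2) * hεε
  have f3 : (ε * coeff 0 B) * (-(e * (q^5).coeff 1) - 2*e^2 * (q^5).coeff 2
        - e^3 * (q^5).coeff 3)
      + (ε * coeff 1 B) * (e * (q^5).coeff 1 + e^2 * (q^5).coeff 2)
      + (ε * coeff 2 B) * (-(e * (q^5).coeff 1)) + (ε * coeff 3 B) * (q^5).coeff 0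
      = -(e * p.coeff 1) - 2*e^2 * p.coeff 2 - e^3 * p.coeff 3 := by
    linear_combination ε * eB3
      + (-(e * p.coeff 1) - 2*e^2 * p.coeff 2 - e^3 * p.coeff 3) * hεε
  obtain ⟨S0, S1, S2, S3⟩ := solve_system e ((q^5).coeff 0) ((q^5).coeff 1) ((q^5).coeff 2)
    ((q^5).coeff 3) (p.coeff 0) (p.coeff 1) (p.coeff 2) (p.coeff 3)
    (coeff 0 A) (coeff 1 A) (coeff 2 A) (coeff 3 A)
    (ε * coeff 0 B) (ε * coeff 1 B) (ε * coeff 2 B) (ε * coeff 3 B)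
    hq50 eA0 eA1 eA2 eA3 f0 f1 f2 f3
  refine ⟨?_, ?_, ?_, ?_⟩
  · linear_combination ε * S0 - coeff 0 B * hεε
  · rw [pow_succ]
    linear_combination ε * S1 - coeff 1 B * hεε
  · linear_combination ε * S2 - coeff 2 B * hεε
  · rw [pow_succ]
    linear_combination ε * S3 - coeff 3 B * hεε
end

section
/- The formal power series I₀ = ∑_{d≥0} ((5d)!/(d!)⁵)·q^d ∈ ℚ[[q]] satisfies the Picard–Fuchs equation of the quintic: θ⁴ I₀ = 5·q·(5θ+1)(5θ+2)(5θ+3)(5θ+4) I₀, where θ = q·d/dq is the formal derivation on ℚ[[q]]. (Equivalently θ⁴I₀ = 5⁵q·∏_{k=1}^{4}(θ + k/5)I₀.) -/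
open PowerSeries

/-- The fundamental period `I₀ = ∑ (5d)!/(d!)⁵ qᵈ` satisfies the Picard–Fuchs
equation of the quintic: `θ⁴ I₀ = 5 q (5θ+1)(5θ+2)(5θ+3)(5θ+4) I₀`,
where `θ = q d/dq`. -/
theorem stmt_1 (θ : PowerSeries ℚ → PowerSeries ℚ)
    (hθ : ∀ f, θ f = PowerSeries.mk fun n => (n : ℚ) * coeff n f)
    (L : ℚ → PowerSeries ℚ → PowerSeries ℚ)
    (hL : ∀ c f, L c f = 5 * θ f + C c * f)
    (I₀ : PowerSeries ℚ)
    (hI₀ : I₀ = PowerSeries.mk fun d => ((5 * d).factorial : ℚ) / ((d.factorial : ℚ)) ^ 5) :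
    θ (θ (θ (θ I₀))) = 5 * X * L 1 (L 2 (L 3 (L 4 I₀))) := by
  subst hI₀
  have h5 : (5 : PowerSeries ℚ) = C 5 := (map_ofNat C 5).symm
  ext n
  simp only [hθ, hL, coeff_mk, map_add, h5, mul_assoc, coeff_C_mul]
  cases n with
  | zero => simp
  | succ n =>
    rw [coeff_succ_X_mul]
    simp only [hθ, hL, coeff_mk, map_add, h5, coeff_C_mul]
    have hf : ((n.factorial : ℚ)) ≠ 0 := by exact_mod_cast n.factorial_ne_zero
    have hf1 : (((n+1).factorial : ℚ)) ≠ 0 := by exact_mod_cast (n+1).factorial_ne_zero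
    have e1 : (5 * (n+1)) = (5*n+4) + 1 := by ring
    rw [e1]
    simp only [Nat.factorial_succ]
    push_cast
    field_simp
    ring
end

section
/- For every integer m ≥ 1 and every j ∈ {0,1,2,3}, the following identity holds in ℚ[t][[q]]: ∑_{d≥1} d^{m−1}·(−1)^d·q^d·[ −b_j(d) + m·b_{j−1}(d) − C(m+1,2)·b_{j−2}(d) + C(m+2,3)·b_{j−3}(d) ] = (−1)^{j+1}·( D^{m+j−1}I_j − t·D^{m+j−1}I_{j−1} + (t²/2)·D^{m+j−1}I_{j−2} − (t³/6)·D^{m+j−1}I_{j−3} ) + (−1)^j·C(m+j−1, j)·δ_{m,1}, where C(n,k) denotes the binomial coefficient and δ_{m,1} = 1 if m = 1 and 0 otherwise. -/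
open PowerSeries


namespace Stmt4Aux

noncomputable def L (n : ℕ) (p : Polynomial ℚ) : Polynomial ℚ :=
  Polynomial.derivative p + (n : Polynomial ℚ) * p

lemma Liter_add (n N : ℕ) (p q : Polynomial ℚ) :
    (L n)^[N] (p + q) = (L n)^[N] p + (L n)^[N] q := by
  induction N generalizing p q with
  | zero => simp
  | succ N ih =>
    rw [Function.iterate_succ_apply, Function.iterate_succ_apply,
      Function.iterate_succ_apply, show L n (p + q) = L n p + L n q by rw [L, L, L]; simp; ring,
      ih]

lemma ch3 (k : ℕ) : (((k+3).choose 3 : ℕ) : ℚ) = (k+1)*(k+2)*(k+3) / 6 := by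
  induction k with
  | zero => norm_num
  | succ n ih =>
    rw [show n+1+3 = (n+3)+1 by ring, Nat.choose_succ_succ]
    push_cast [ih, Nat.cast_choose_two]
    ring

lemma coeff_D_iter (D : PowerSeries (Polynomial ℚ) → PowerSeries (Polynomial ℚ))
    (hD : ∀ f n, coeff n (D f) =
      Polynomial.derivative (coeff n f) +
        (n : Polynomial ℚ) * coeff n f)
    (N : ℕ) (f : PowerSeries (Polynomial ℚ)) (n : ℕ) :
    coeff n (D^[N] f) = (L n)^[N] (coeff n f) := by
  induction N with
  | zero => simp
  | succ N ih =>
    rw [Function.iterate_succ_apply', Function.iterate_succ_apply', hD, ih, L]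


lemma hp1 (c : ℚ) (N : ℕ) : (N:ℚ) * c^(N-1) * c = N * c^N := by
  cases N with
  | zero => simp
  | succ n => push_cast; rw [pow_succ]; ring


lemma hp2 (c : ℚ) (N : ℕ) :
    (N:ℚ) * ((N:ℚ)-1) * c^(N-2) * c = N * ((N:ℚ)-1) * c^(N-1) := by
  cases N with
  | zero => simp
  | succ n =>
    have h := hp1 c n
    push_cast
    linear_combination ((n:ℚ)+1) * h


lemma hp3 (c : ℚ) (N : ℕ) :
    (N:ℚ) * ((N:ℚ)-1) * ((N:ℚ)-2) * c^(N-3) * c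
      = N * ((N:ℚ)-1) * ((N:ℚ)-2) * c^(N-2) := by
  cases N with
  | zero => simp
  | succ n =>
    have h := hp2 c n
    push_cast
    linear_combination ((n:ℚ)+1) * h


lemma it0 (n N : ℕ) (c : ℚ) :
    (L n)^[N] (Polynomial.C c) = Polynomial.C (c * (n:ℚ)^N) := by
  induction N with
  | zero => simp
  | succ N ih =>
    rw [Function.iterate_succ_apply', ih, L]
    rw [Polynomial.derivative_C, ← Polynomial.C_eq_natCast, ← map_mul, zero_add]
    congr 1
    rw [pow_succ]; ring


lemma it1 (n N : ℕ) (c : ℚ) :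
    (L n)^[N] (Polynomial.C c * Polynomial.X) =
      Polynomial.C (c * (n:ℚ)^N) * Polynomial.X
        + Polynomial.C (c * (N:ℚ) * (n:ℚ)^(N-1)) := by
  induction N with
  | zero => simp
  | succ N ih =>
    rw [Function.iterate_succ_apply', ih, L, Nat.add_sub_cancel]
    have e1 : Polynomial.C (c * (n:ℚ)^(N+1)) =
        Polynomial.C (c * (n:ℚ)^N) * Polynomial.C (n:ℚ) := by
      rw [← map_mul]; congr 1; rw [pow_succ]; ring
    have e0 : Polynomial.C (c * ((N+1:ℕ):ℚ) * (n:ℚ)^N) =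
        Polynomial.C (c * (n:ℚ)^N)
          + Polynomial.C (c * (N:ℚ) * (n:ℚ)^(N-1)) * Polynomial.C (n:ℚ) := by
      rw [← map_mul, ← map_add]; congr 1; push_cast
      linear_combination (-c) * hp1 (n:ℚ) N
    rw [e1, e0, ← Polynomial.C_eq_natCast]
    simp only [Polynomial.derivative_add, Polynomial.derivative_mul, Polynomial.derivative_C,
      Polynomial.derivative_X, zero_mul, mul_one, zero_add]
    ring


lemma it2 (n N : ℕ) (c : ℚ) :
    (L n)^[N] (Polynomial.C c * Polynomial.X ^ 2) =
      Polynomial.C (c * (n:ℚ)^N) * Polynomial.X ^ 2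
        + Polynomial.C (c * 2 * (N:ℚ) * (n:ℚ)^(N-1)) * Polynomial.X
        + Polynomial.C (c * (N:ℚ) * ((N:ℚ)-1) * (n:ℚ)^(N-2)) := by
  induction N with
  | zero => simp
  | succ N ih =>
    rw [Function.iterate_succ_apply', ih, L, Nat.add_sub_cancel,
      show N+1-2 = N-1 from rfl]
    have e2 : Polynomial.C (c * (n:ℚ)^(N+1)) =
        Polynomial.C (c * (n:ℚ)^N) * Polynomial.C (n:ℚ) := by
      rw [← map_mul]; congr 1; rw [pow_succ]; ring
    have e1 : Polynomial.C (c * 2 * ((N+1:ℕ):ℚ) * (n:ℚ)^N) =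
        Polynomial.C (2 * (c * (n:ℚ)^N))
          + Polynomial.C (c * 2 * (N:ℚ) * (n:ℚ)^(N-1)) * Polynomial.C (n:ℚ) := by
      rw [← map_mul, ← map_add]; congr 1; push_cast
      linear_combination (-2*c) * hp1 (n:ℚ) N
    have e0 : Polynomial.C (c * ((N+1:ℕ):ℚ) * (((N+1:ℕ):ℚ)-1) * (n:ℚ)^(N-1)) =
        Polynomial.C (c * 2 * (N:ℚ) * (n:ℚ)^(N-1))
          + Polynomial.C (c * (N:ℚ) * ((N:ℚ)-1) * (n:ℚ)^(N-2)) * Polynomial.C (n:ℚ) := by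
      rw [← map_mul, ← map_add]; congr 1; push_cast
      linear_combination (-c) * hp2 (n:ℚ) N
    rw [e2, e1, e0, ← Polynomial.C_eq_natCast]
    simp only [Polynomial.derivative_add, Polynomial.derivative_mul, Polynomial.derivative_C,
      Polynomial.derivative_X, Polynomial.derivative_X_pow, Polynomial.derivative_ofNat,
      zero_mul, mul_one, zero_add, map_mul, map_ofNat]
    push_cast
    simp only [map_ofNat, Polynomial.derivative_ofNat, zero_mul, mul_zero, add_zero, zero_add]
    ring


lemma it3 (n N : ℕ) (c : ℚ) :
    (L n)^[N] (Polynomial.C c * Polynomial.X ^ 3) =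
      Polynomial.C (c * (n:ℚ)^N) * Polynomial.X ^ 3
        + Polynomial.C (c * 3 * (N:ℚ) * (n:ℚ)^(N-1)) * Polynomial.X ^ 2
        + Polynomial.C (c * 3 * (N:ℚ) * ((N:ℚ)-1) * (n:ℚ)^(N-2)) * Polynomial.X
        + Polynomial.C (c * (N:ℚ) * ((N:ℚ)-1) * ((N:ℚ)-2) * (n:ℚ)^(N-3)) := by
  induction N with
  | zero => simp
  | succ N ih =>
    rw [Function.iterate_succ_apply', ih, L, Nat.add_sub_cancel,
      show N+1-2 = N-1 from rfl, show N+1-3 = N-2 from rfl]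
    have e3 : Polynomial.C (c * (n:ℚ)^(N+1)) =
        Polynomial.C (c * (n:ℚ)^N) * Polynomial.C (n:ℚ) := by
      rw [← map_mul]; congr 1; rw [pow_succ]; ring
    have e2 : Polynomial.C (c * 3 * ((N+1:ℕ):ℚ) * (n:ℚ)^N) =
        Polynomial.C (3 * (c * (n:ℚ)^N))
          + Polynomial.C (c * 3 * (N:ℚ) * (n:ℚ)^(N-1)) * Polynomial.C (n:ℚ) := by
      rw [← map_mul, ← map_add]; congr 1; push_cast
      linear_combination (-3*c) * hp1 (n:ℚ) N
    have e1 : Polynomial.C (c * 3 * ((N+1:ℕ):ℚ) * (((N+1:ℕ):ℚ)-1) * (n:ℚ)^(N-1)) =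
        Polynomial.C (2 * (c * 3 * (N:ℚ) * (n:ℚ)^(N-1)))
          + Polynomial.C (c * 3 * (N:ℚ) * ((N:ℚ)-1) * (n:ℚ)^(N-2)) * Polynomial.C (n:ℚ) := by
      rw [← map_mul, ← map_add]; congr 1; push_cast
      linear_combination (-3*c) * hp2 (n:ℚ) N
    have e0 : Polynomial.C (c * ((N+1:ℕ):ℚ) * (((N+1:ℕ):ℚ)-1) * (((N+1:ℕ):ℚ)-2) * (n:ℚ)^(N-2)) =
        Polynomial.C (c * 3 * (N:ℚ) * ((N:ℚ)-1) * (n:ℚ)^(N-2))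
          + Polynomial.C (c * (N:ℚ) * ((N:ℚ)-1) * ((N:ℚ)-2) * (n:ℚ)^(N-3)) * Polynomial.C (n:ℚ) := by
      rw [← map_mul, ← map_add]; congr 1; push_cast
      linear_combination (-c) * hp3 (n:ℚ) N
    rw [e3, e2, e1, e0, ← Polynomial.C_eq_natCast]
    simp only [Polynomial.derivative_add, Polynomial.derivative_mul, Polynomial.derivative_C,
      Polynomial.derivative_X, Polynomial.derivative_X_pow, Polynomial.derivative_ofNat,
      zero_mul, mul_one, zero_add, map_mul, map_ofNat]
    push_cast
    simp only [map_ofNat, Polynomial.derivative_ofNat, zero_mul, mul_zero, add_zero, zero_add]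
    ring



lemma K3 (n N : ℕ) (c0 c1 c2 c3 : ℚ) :
    (L n)^[N] (Polynomial.C (c0/6) * Polynomial.X^3 + Polynomial.C (c1/2) * Polynomial.X^2
        + Polynomial.C c2 * Polynomial.X + Polynomial.C c3) =
      Polynomial.C (c0/6 * (n:ℚ)^N) * Polynomial.X^3
      + Polynomial.C (c0/6*3*(N:ℚ)*(n:ℚ)^(N-1) + c1/2 * (n:ℚ)^N) * Polynomial.X^2
      + Polynomial.C (c0/6*3*(N:ℚ)*((N:ℚ)-1)*(n:ℚ)^(N-2) + c1/2*2*(N:ℚ)*(n:ℚ)^(N-1)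
          + c2*(n:ℚ)^N) * Polynomial.X
      + Polynomial.C (c0/6*(N:ℚ)*((N:ℚ)-1)*((N:ℚ)-2)*(n:ℚ)^(N-3)
          + c1/2*(N:ℚ)*((N:ℚ)-1)*(n:ℚ)^(N-2) + c2*(N:ℚ)*(n:ℚ)^(N-1) + c3*(n:ℚ)^N) := by
  rw [Liter_add, Liter_add, Liter_add, it3, it2, it1, it0]
  simp only [map_add]
  ring

lemma K2 (n N : ℕ) (c0 c1 c2 : ℚ) :
    (L n)^[N] (Polynomial.C (c0/2) * Polynomial.X^2 + Polynomial.C c1 * Polynomial.X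
        + Polynomial.C c2) =
      Polynomial.C (c0/2 * (n:ℚ)^N) * Polynomial.X^2
      + Polynomial.C (c0/2*2*(N:ℚ)*(n:ℚ)^(N-1) + c1 * (n:ℚ)^N) * Polynomial.X
      + Polynomial.C (c0/2*(N:ℚ)*((N:ℚ)-1)*(n:ℚ)^(N-2) + c1*(N:ℚ)*(n:ℚ)^(N-1)
          + c2*(n:ℚ)^N) := by
  rw [Liter_add, Liter_add, it2, it1, it0]
  simp only [map_add]
  ring

lemma K1 (n N : ℕ) (c0 c1 : ℚ) :
    (L n)^[N] (Polynomial.C c0 * Polynomial.X + Polynomial.C c1) =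
      Polynomial.C (c0 * (n:ℚ)^N) * Polynomial.X
      + Polynomial.C (c0*(N:ℚ)*(n:ℚ)^(N-1) + c1*(n:ℚ)^N) := by
  rw [Liter_add, it1, it0]
  simp only [map_add]
  ring


lemma buildC {c3 c2 c1 c0 s : ℚ} (h3 : c3 = 0) (h2 : c2 = 0) (h1 : c1 = 0) (h0 : c0 = s) :
    Polynomial.C c3 * Polynomial.X^3 + Polynomial.C c2 * Polynomial.X^2
      + Polynomial.C c1 * Polynomial.X + Polynomial.C c0 = Polynomial.C s := by
  subst h3; subst h2; subst h1; subst h0; simp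


lemma Liter_zero (n N : ℕ) : (L n)^[N] 0 = 0 := by
  simpa using it0 n N 0

lemma build1 {c1 c0 s : ℚ} (h1 : c1 = 0) (h0 : c0 = s) :
    Polynomial.C c1 * Polynomial.X + Polynomial.C c0 = Polynomial.C s := by
  subst h1; subst h0; simp

lemma build2 {c2 c1 c0 s : ℚ} (h2 : c2 = 0) (h1 : c1 = 0) (h0 : c0 = s) :
    Polynomial.C c2 * Polynomial.X^2 + Polynomial.C c1 * Polynomial.X + Polynomial.C c0
      = Polynomial.C s := by
  subst h2; subst h1; subst h0; simp


lemma build2n {c2 c1 c0 s : ℚ} (h2 : c2 = 0) (h1 : c1 = 0) (h0 : -c0 = s) :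
    -(Polynomial.C c2 * Polynomial.X^2 + Polynomial.C c1 * Polynomial.X + Polynomial.C c0)
      = Polynomial.C s := by
  subst h2; subst h1; rw [← h0]; simp

end Stmt4Aux

/-- The hypergeometric identity relating the MSP edge coefficients `b_r(d)` to derivatives
of the Givental `I`-function coefficients `I_j`, in the ring `ℚ[t][[q]]` with the
derivation `D = ∂_t + q ∂_q` (where `q` plays the role of `e^t`). -/
theorem stmt_4
    (a b : ℤ → ℕ → ℚ)
    (ha00 : a 0 0 = 1)
    (ha0 : ∀ r : ℤ, r ≠ 0 → a r 0 = 0)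
    (haneg : ∀ (r : ℤ) (d : ℕ), r < 0 → a r d = 0)
    (hav : ∀ d : ℕ, 1 ≤ d → ∀ r : ℕ, r ≤ 3 →
      a r d = coeff r
        ((∏ k ∈ Finset.Icc 1 (5 * d), ((5 : PowerSeries ℚ) * X + C (k : ℚ))) *
         ((∏ k ∈ Finset.Icc 1 d, (X + C (k : ℚ)))⁻¹) ^ 5))
    (hb0 : ∀ d : ℕ, b 0 d = (-1 : ℚ) ^ d * a 0 d)
    (hb1 : ∀ d : ℕ, b 1 d = (-1 : ℚ) ^ (d + 1) * (d : ℚ) * a 1 d)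
    (hb2 : ∀ d : ℕ, b 2 d = (-1 : ℚ) ^ d * ((d : ℚ) ^ 2 * a 2 d + (d : ℚ) * a 1 d))
    (hb3 : ∀ d : ℕ, b 3 d = (-1 : ℚ) ^ (d + 1) *
      ((d : ℚ) ^ 3 * a 3 d + 2 * (d : ℚ) ^ 2 * a 2 d + (d : ℚ) * a 1 d))
    (hbneg : ∀ (r : ℤ) (d : ℕ), r < 0 → b r d = 0)
    (I : ℤ → PowerSeries (Polynomial ℚ))
    (hIneg : ∀ j : ℤ, j < 0 → I j = 0)
    (hI : ∀ j : ℕ, j ≤ 3 → I j = PowerSeries.mk fun d =>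
      ∑ r ∈ Finset.range (j + 1),
        Polynomial.C (a r d / ((j - r).factorial : ℚ)) * Polynomial.X ^ (j - r))
    (D : PowerSeries (Polynomial ℚ) → PowerSeries (Polynomial ℚ))
    (hD : ∀ f n, coeff n (D f) =
      Polynomial.derivative (coeff n f) +
        (n : Polynomial ℚ) * coeff n f)
    (m : ℕ) (hm : 1 ≤ m) (j : ℕ) (hj : j ≤ 3) :
    (PowerSeries.mk fun d : ℕ => if d = 0 then 0 else Polynomial.C
        ((d : ℚ) ^ (m - 1) * (-1 : ℚ) ^ d *
          (- b j d + (m : ℚ) * b ((j : ℤ) - 1) d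
            - ((m + 1).choose 2 : ℚ) * b ((j : ℤ) - 2) d
            + ((m + 2).choose 3 : ℚ) * b ((j : ℤ) - 3) d))) =
    ((-1 : ℚ) ^ (j + 1)) •
      (D^[m + j - 1] (I j)
        - PowerSeries.C Polynomial.X * D^[m + j - 1] (I ((j : ℤ) - 1))
        + PowerSeries.C (Polynomial.C (1 / 2 : ℚ) * Polynomial.X ^ 2) *
            D^[m + j - 1] (I ((j : ℤ) - 2))
        - PowerSeries.C (Polynomial.C (1 / 6 : ℚ) * Polynomial.X ^ 3) *
            D^[m + j - 1] (I ((j : ℤ) - 3)))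
    + (if m = 1 then
        ((-1 : ℚ) ^ j * ((m + j - 1).choose j : ℚ)) • (1 : PowerSeries (Polynomial ℚ))
       else 0) := by
  clear hav haneg
  obtain ⟨k, rfl⟩ : ∃ k, m = k + 1 := ⟨m - 1, by omega⟩
  clear hm
  refine PowerSeries.ext fun d => ?_
  interval_cases j
  · -- j = 0
    rw [show ((0:ℕ):ℤ) - 1 = (-1:ℤ) by norm_num,
        show ((0:ℕ):ℤ) - 2 = (-2:ℤ) by norm_num,
        show ((0:ℕ):ℤ) - 3 = (-3:ℤ) by norm_num,
        hIneg (-1) (by norm_num), hIneg (-2) (by norm_num), hIneg (-3) (by norm_num),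
        show k + 1 + 0 - 1 = k from rfl]
    have hI0 : I ((0:ℕ):ℤ) = PowerSeries.mk fun dd => (Polynomial.C (a 0 dd)) := by
      rw [hI 0 (by norm_num)]
      congr 1; funext dd
      simp
    rw [hI0]
    simp only [coeff_mk, map_add, map_sub, PowerSeries.coeff_smul, coeff_C_mul,
      Stmt4Aux.coeff_D_iter D hD, coeff_one, apply_ite (coeff d),
      map_zero, smul_ite, smul_zero, Stmt4Aux.Liter_zero, mul_zero, sub_zero, add_zero]
    rw [Stmt4Aux.it0]
    norm_num only
    rcases eq_or_ne d 0 with rfl|hd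
    · rcases k with _|k'
      · norm_num [ha00, Polynomial.smul_eq_C_mul]
      · simp [ha00, zero_pow, Nat.succ_ne_zero]
    · rw [if_neg hd]
      simp only [if_neg hd, ite_self, add_zero]
      rw [neg_one_smul, ← map_neg]
      congr 1
      rw [hb0 d, hbneg (-1) d (by norm_num), hbneg (-2) d (by norm_num),
        hbneg (-3) d (by norm_num)]
      rcases Nat.even_or_odd d with he|ho
      · simp only [he.neg_one_pow]; ring
      · simp only [ho.neg_one_pow]; ring
  · -- j = 1
    rw [show ((1:ℕ):ℤ) - 1 = ((0:ℕ):ℤ) by norm_num,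
        show ((1:ℕ):ℤ) - 2 = (-1:ℤ) by norm_num,
        show ((1:ℕ):ℤ) - 3 = (-2:ℤ) by norm_num,
        hIneg (-1) (by norm_num), hIneg (-2) (by norm_num),
        show k + 1 + 1 - 1 = k + 1 from rfl]
    have hI1 : I ((1:ℕ):ℤ) = PowerSeries.mk fun dd =>
        (Polynomial.C (a 0 dd) * Polynomial.X + Polynomial.C (a 1 dd)) := by
      rw [hI 1 (by norm_num)]
      congr 1; funext dd
      simp [Finset.sum_range_succ, Nat.factorial]
    have hI0 : I ((0:ℕ):ℤ) = PowerSeries.mk fun dd => (Polynomial.C (a 0 dd)) := by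
      rw [hI 0 (by norm_num)]
      congr 1; funext dd
      simp
    rw [hI1, hI0]
    simp only [coeff_mk, map_add, map_sub, PowerSeries.coeff_smul, coeff_C_mul,
      Stmt4Aux.coeff_D_iter D hD, coeff_one, apply_ite (coeff d),
      map_zero, smul_ite, smul_zero, Stmt4Aux.Liter_zero, mul_zero, sub_zero, add_zero]
    rw [Stmt4Aux.K1, Stmt4Aux.it0, show k + 1 - 1 = k from rfl]
    norm_num only
    have trans : (Polynomial.C (a 0 d * (d:ℚ) ^ (k + 1)) * Polynomial.X +
          Polynomial.C (a 0 d * ((k+1:ℕ):ℚ) * (d:ℚ) ^ k + a 1 d * (d:ℚ) ^ (k + 1)) -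
          Polynomial.X * Polynomial.C (a 0 d * (d:ℚ) ^ (k + 1)))
        = Polynomial.C (a 0 d * (d:ℚ) ^ (k + 1) - a 0 d * (d:ℚ) ^ (k + 1)) * Polynomial.X +
          Polynomial.C (a 0 d * ((k+1:ℕ):ℚ) * (d:ℚ) ^ k + a 1 d * (d:ℚ) ^ (k + 1)) := by
      simp only [map_add, map_sub, map_mul]
      ring
    rw [trans, one_smul]
    rcases eq_or_ne d 0 with rfl|hd
    · have a1 : a 1 0 = 0 := ha0 1 (by norm_num)
      rcases k with _|k'
      · norm_num [ha00, a1, Polynomial.smul_eq_C_mul]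
      · simp [ha00, a1, zero_pow, Nat.succ_ne_zero]
    · rw [if_neg hd]
      simp only [if_neg hd, ite_self, add_zero]
      refine (Stmt4Aux.build1 ?_ ?_).symm
      · ring
      · rw [hb1 d, hb0 d, hbneg (-1) d (by norm_num), hbneg (-2) d (by norm_num)]
        push_cast
        rcases Nat.even_or_odd d with he|ho
        · simp only [he.neg_one_pow, pow_succ, one_mul, mul_one]; ring
        · simp only [ho.neg_one_pow, pow_succ]; ring
  · -- j = 2
    rw [show ((2:ℕ):ℤ) - 1 = ((1:ℕ):ℤ) by norm_num,
        show ((2:ℕ):ℤ) - 2 = ((0:ℕ):ℤ) by norm_num,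
        show ((2:ℕ):ℤ) - 3 = (-1:ℤ) by norm_num,
        hIneg (-1) (by norm_num),
        show k + 1 + 2 - 1 = k + 2 from rfl]
    have hI2 : I ((2:ℕ):ℤ) = PowerSeries.mk fun dd =>
        (Polynomial.C (a 0 dd/2) * Polynomial.X^2
          + Polynomial.C (a 1 dd) * Polynomial.X + Polynomial.C (a 2 dd)) := by
      rw [hI 2 (by norm_num)]
      congr 1; funext dd
      simp [Finset.sum_range_succ, Nat.factorial]
    have hI1 : I ((1:ℕ):ℤ) = PowerSeries.mk fun dd =>
        (Polynomial.C (a 0 dd) * Polynomial.X + Polynomial.C (a 1 dd)) := by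
      rw [hI 1 (by norm_num)]
      congr 1; funext dd
      simp [Finset.sum_range_succ, Nat.factorial]
    have hI0 : I ((0:ℕ):ℤ) = PowerSeries.mk fun dd => (Polynomial.C (a 0 dd)) := by
      rw [hI 0 (by norm_num)]
      congr 1; funext dd
      simp
    rw [hI2, hI1, hI0]
    simp only [coeff_mk, map_add, map_sub, PowerSeries.coeff_smul, coeff_C_mul,
      Stmt4Aux.coeff_D_iter D hD, coeff_one, apply_ite (coeff d),
      map_zero, smul_ite, smul_zero, Stmt4Aux.Liter_zero, mul_zero, sub_zero, add_zero]
    rw [Stmt4Aux.K2, Stmt4Aux.K1, Stmt4Aux.it0,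
      show k + 2 - 1 = k + 1 from rfl, show k + 2 - 2 = k from rfl]
    norm_num only
    set Q : ℚ := ((k+2:ℕ):ℚ) with hQ
    have trans : (Polynomial.C (a 0 d / 2 * (d:ℚ) ^ (k + 2)) * Polynomial.X ^ 2 +
          Polynomial.C (a 0 d / 2 * 2 * Q * (d:ℚ) ^ (k + 1) + a 1 d * (d:ℚ) ^ (k + 2)) *
            Polynomial.X +
          Polynomial.C (a 0 d / 2 * Q * (Q - 1) * (d:ℚ) ^ k + a 1 d * Q * (d:ℚ) ^ (k + 1) +
            a 2 d * (d:ℚ) ^ (k + 2)) -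
          Polynomial.X * (Polynomial.C (a 0 d * (d:ℚ) ^ (k + 2)) * Polynomial.X +
            Polynomial.C (a 0 d * Q * (d:ℚ) ^ (k + 1) + a 1 d * (d:ℚ) ^ (k + 2))) +
          Polynomial.C (1 / 2) * Polynomial.X ^ 2 * Polynomial.C (a 0 d * (d:ℚ) ^ (k + 2)))
        = Polynomial.C (a 0 d / 2 * (d:ℚ) ^ (k + 2) - a 0 d * (d:ℚ) ^ (k + 2)
              + 1/2 * (a 0 d * (d:ℚ) ^ (k + 2))) * Polynomial.X ^ 2 +
          Polynomial.C ((a 0 d / 2 * 2 * Q * (d:ℚ) ^ (k + 1) + a 1 d * (d:ℚ) ^ (k + 2))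
              - (a 0 d * Q * (d:ℚ) ^ (k + 1) + a 1 d * (d:ℚ) ^ (k + 2))) * Polynomial.X +
          Polynomial.C (a 0 d / 2 * Q * (Q - 1) * (d:ℚ) ^ k + a 1 d * Q * (d:ℚ) ^ (k + 1) +
            a 2 d * (d:ℚ) ^ (k + 2)) := by
      simp only [map_add, map_sub, map_mul, map_div₀, map_ofNat, map_one]
      ring
    rw [trans]
    rcases eq_or_ne d 0 with rfl|hd
    · have a1 : a 1 0 = 0 := ha0 1 (by norm_num)
      have a2 : a 2 0 = 0 := ha0 2 (by norm_num)
      rcases k with _|k'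
      · norm_num [ha00, a1, a2, hQ, Polynomial.smul_eq_C_mul]
      · simp [ha00, a1, a2, hQ, zero_pow, Nat.succ_ne_zero]
    · rw [if_neg hd]
      simp only [if_neg hd, ite_self, add_zero]
      rw [neg_one_smul]
      refine (Stmt4Aux.build2n ?_ ?_ ?_).symm
      · ring
      · ring
      · rw [hb2 d, hb1 d, hb0 d, hbneg (-1) d (by norm_num),
          show k+1+1 = k+2 from rfl, Nat.cast_choose_two, hQ]
        push_cast
        rcases Nat.even_or_odd d with he|ho
        · simp only [he.neg_one_pow, pow_succ, one_mul, mul_one]; ring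
        · simp only [ho.neg_one_pow, pow_succ]; ring
  · -- j = 3
    rw [show ((3:ℕ):ℤ) - 1 = ((2:ℕ):ℤ) by norm_num,
        show ((3:ℕ):ℤ) - 2 = ((1:ℕ):ℤ) by norm_num,
        show ((3:ℕ):ℤ) - 3 = ((0:ℕ):ℤ) by norm_num,
        show k + 1 + 3 - 1 = k + 3 from rfl]
    have hI3 : I ((3:ℕ):ℤ) = PowerSeries.mk fun dd =>
        (Polynomial.C (a 0 dd/6) * Polynomial.X^3 + Polynomial.C (a 1 dd/2) * Polynomial.X^2
          + Polynomial.C (a 2 dd) * Polynomial.X + Polynomial.C (a 3 dd)) := by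
      rw [hI 3 (by norm_num)]
      congr 1; funext dd
      simp [Finset.sum_range_succ, Nat.factorial]
    have hI2 : I ((2:ℕ):ℤ) = PowerSeries.mk fun dd =>
        (Polynomial.C (a 0 dd/2) * Polynomial.X^2
          + Polynomial.C (a 1 dd) * Polynomial.X + Polynomial.C (a 2 dd)) := by
      rw [hI 2 (by norm_num)]
      congr 1; funext dd
      simp [Finset.sum_range_succ, Nat.factorial]
    have hI1 : I ((1:ℕ):ℤ) = PowerSeries.mk fun dd =>
        (Polynomial.C (a 0 dd) * Polynomial.X + Polynomial.C (a 1 dd)) := by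
      rw [hI 1 (by norm_num)]
      congr 1; funext dd
      simp [Finset.sum_range_succ, Nat.factorial]
    have hI0 : I ((0:ℕ):ℤ) = PowerSeries.mk fun dd => (Polynomial.C (a 0 dd)) := by
      rw [hI 0 (by norm_num)]
      congr 1; funext dd
      simp
    rw [hI3, hI2, hI1, hI0]
    simp only [coeff_mk, map_add, map_sub, PowerSeries.coeff_smul, coeff_C_mul,
      Stmt4Aux.coeff_D_iter D hD, coeff_one, apply_ite (coeff d),
      map_zero, smul_ite, smul_zero]
    rw [Stmt4Aux.K3, Stmt4Aux.K2, Stmt4Aux.K1, Stmt4Aux.it0,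
      show k + 3 - 1 = k + 2 from rfl, show k + 3 - 2 = k + 1 from rfl,
      show k + 3 - 3 = k from rfl]
    norm_num only
    set Q : ℚ := ((k+3:ℕ):ℚ) with hQ
    have trans : (Polynomial.C (a 0 d / 6 * (d:ℚ) ^ (k + 3)) * Polynomial.X ^ 3 +
          Polynomial.C (a 0 d / 6 * 3 * Q * (d:ℚ) ^ (k + 2) + a 1 d / 2 * (d:ℚ) ^ (k + 3)) *
            Polynomial.X ^ 2 +
          Polynomial.C (a 0 d / 6 * 3 * Q * (Q - 1) * (d:ℚ) ^ (k + 1) +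
              a 1 d / 2 * 2 * Q * (d:ℚ) ^ (k + 2) + a 2 d * (d:ℚ) ^ (k + 3)) * Polynomial.X +
          Polynomial.C (a 0 d / 6 * Q * (Q - 1) * (Q - 2) * (d:ℚ) ^ k +
              a 1 d / 2 * Q * (Q - 1) * (d:ℚ) ^ (k + 1) + a 2 d * Q * (d:ℚ) ^ (k + 2) +
              a 3 d * (d:ℚ) ^ (k + 3)) -
        Polynomial.X * (Polynomial.C (a 0 d / 2 * (d:ℚ) ^ (k + 3)) * Polynomial.X ^ 2 +
            Polynomial.C (a 0 d / 2 * 2 * Q * (d:ℚ) ^ (k + 2) + a 1 d * (d:ℚ) ^ (k + 3)) *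
              Polynomial.X +
            Polynomial.C (a 0 d / 2 * Q * (Q - 1) * (d:ℚ) ^ (k + 1) +
              a 1 d * Q * (d:ℚ) ^ (k + 2) + a 2 d * (d:ℚ) ^ (k + 3))) +
        Polynomial.C (1 / 2) * Polynomial.X ^ 2 *
          (Polynomial.C (a 0 d * (d:ℚ) ^ (k + 3)) * Polynomial.X +
            Polynomial.C (a 0 d * Q * (d:ℚ) ^ (k + 2) + a 1 d * (d:ℚ) ^ (k + 3))) -
        Polynomial.C (1 / 6) * Polynomial.X ^ 3 * Polynomial.C (a 0 d * (d:ℚ) ^ (k + 3)))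
        =
        Polynomial.C (a 0 d / 6 * (d:ℚ) ^ (k + 3) - a 0 d / 2 * (d:ℚ) ^ (k + 3)
            + 1/2 * (a 0 d * (d:ℚ) ^ (k + 3)) - 1/6 * (a 0 d * (d:ℚ) ^ (k + 3)))
            * Polynomial.X ^ 3 +
        Polynomial.C ((a 0 d / 6 * 3 * Q * (d:ℚ) ^ (k + 2) + a 1 d / 2 * (d:ℚ) ^ (k + 3))
            - (a 0 d / 2 * 2 * Q * (d:ℚ) ^ (k + 2) + a 1 d * (d:ℚ) ^ (k + 3))
            + 1/2 * (a 0 d * Q * (d:ℚ) ^ (k + 2) + a 1 d * (d:ℚ) ^ (k + 3)))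
            * Polynomial.X ^ 2 +
        Polynomial.C ((a 0 d / 6 * 3 * Q * (Q - 1) * (d:ℚ) ^ (k + 1)
              + a 1 d / 2 * 2 * Q * (d:ℚ) ^ (k + 2) + a 2 d * (d:ℚ) ^ (k + 3))
            - (a 0 d / 2 * Q * (Q - 1) * (d:ℚ) ^ (k + 1)
              + a 1 d * Q * (d:ℚ) ^ (k + 2) + a 2 d * (d:ℚ) ^ (k + 3)))
            * Polynomial.X +
        Polynomial.C (a 0 d / 6 * Q * (Q - 1) * (Q - 2) * (d:ℚ) ^ k +
            a 1 d / 2 * Q * (Q - 1) * (d:ℚ) ^ (k + 1) + a 2 d * Q * (d:ℚ) ^ (k + 2) +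
            a 3 d * (d:ℚ) ^ (k + 3)) := by
      simp only [map_add, map_sub, map_mul, map_one, map_pow, map_div₀, map_ofNat]
      ring
    rw [trans, one_smul]
    rcases eq_or_ne d 0 with rfl|hd
    · have a1 : a 1 0 = 0 := ha0 1 (by norm_num)
      have a2 : a 2 0 = 0 := ha0 2 (by norm_num)
      have a3 : a 3 0 = 0 := ha0 3 (by norm_num)
      rcases k with _|k'
      · norm_num [ha00, a1, a2, a3, hQ, Polynomial.smul_eq_C_mul]
      · simp [ha00, a1, a2, a3, hQ, zero_pow, Nat.succ_ne_zero]
    · rw [if_neg hd, show (k+1-1) = k from rfl]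
      simp only [if_neg hd, ite_self, add_zero]
      refine (Stmt4Aux.buildC ?_ ?_ ?_ ?_).symm
      · ring
      · ring
      · ring
      · rw [hb3 d, hb2 d, hb1 d, hb0 d, show k+1+1 = k+2 from rfl, show k+1+2 = k+3 from rfl,
          Nat.cast_choose_two, Stmt4Aux.ch3, hQ]
        push_cast
        rcases Nat.even_or_odd d with he|ho
        · simp only [he.neg_one_pow, pow_succ, one_mul, mul_one]
          ring
        · simp only [ho.neg_one_pow, pow_succ]
          ring
end

section
/- Let J be an open interval, let I₀, T : J → ℝ be differentiable, and let F be a twice-differentiable real function on an open interval containing T(J). Define I₁ = T·I₀, I₂ = (F′∘T)·I₀, and I₃ = (T·(F′∘T) − 2·(F∘T))·I₀. Then on J one has the Wronskian identity I₀·I₃′ − I₀′·I₃ = I₁·I₂′ − I₁′·I₂. -/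
/-- The symplectic Wronskian identity `I₀I₃′ − I₀′I₃ = I₁I₂′ − I₁′I₂` for the
special-geometry quadruple `(I₀, I₁, I₂, I₃) = I₀·(1, T, F_T, T·F_T − 2F)`. -/
theorem stmt_9 (a b : ℝ) (I₀ T : ℝ → ℝ)
    (hI₀ : DifferentiableOn ℝ I₀ (Set.Ioo a b))
    (hT : DifferentiableOn ℝ T (Set.Ioo a b))
    (c d : ℝ) (hTJ : ∀ t ∈ Set.Ioo a b, T t ∈ Set.Ioo c d)
    (F : ℝ → ℝ) (hF : ContDiffOn ℝ 2 F (Set.Ioo c d))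
    (I₁ I₂ I₃ : ℝ → ℝ)
    (hI₁ : I₁ = fun t => T t * I₀ t)
    (hI₂ : I₂ = fun t => deriv F (T t) * I₀ t)
    (hI₃ : I₃ = fun t => (T t * deriv F (T t) - 2 * F (T t)) * I₀ t) :
    ∀ t ∈ Set.Ioo a b,
      I₀ t * deriv I₃ t - deriv I₀ t * I₃ t = I₁ t * deriv I₂ t - deriv I₁ t * I₂ t := by
  subst hI₁ hI₂ hI₃
  intro t ht
  have hmem : Set.Ioo a b ∈ nhds t := isOpen_Ioo.mem_nhds ht
  have hmemT : Set.Ioo c d ∈ nhds (T t) := isOpen_Ioo.mem_nhds (hTJ t ht)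
  have hI₀t : DifferentiableAt ℝ I₀ t := (hI₀ t ht).differentiableAt hmem
  have hTt : DifferentiableAt ℝ T t := (hT t ht).differentiableAt hmem
  have hF1 : DifferentiableAt ℝ F (T t) :=
    ((hF.differentiableOn (by norm_num)) (T t) (hTJ t ht)).differentiableAt hmemT
  have hF' : ContDiffOn ℝ 1 (deriv F) (Set.Ioo c d) := by
    have := hF.deriv_of_isOpen (m := 1) isOpen_Ioo (by norm_num)
    simpa using this
  have hF2 : DifferentiableAt ℝ (deriv F) (T t) :=
    ((hF'.differentiableOn (by norm_num)) (T t) (hTJ t ht)).differentiableAt hmemT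
  have hcomp : DifferentiableAt ℝ (fun s => F (T s)) t := hF1.comp t hTt
  have hgcomp : DifferentiableAt ℝ (fun s => deriv F (T s)) t := hF2.comp t hTt
  have ecomp : deriv (fun s => F (T s)) t = deriv F (T t) * deriv T t :=
    deriv_comp t hF1 hTt
  have egcomp : deriv (fun s => deriv F (T s)) t
      = deriv (deriv F) (T t) * deriv T t := deriv_comp t hF2 hTt
  have e1 : deriv (fun s => T s * I₀ s) t = deriv T t * I₀ t + T t * deriv I₀ t :=
    deriv_mul hTt hI₀t
  have e2 : deriv (fun s => deriv F (T s) * I₀ s) t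
      = deriv (deriv F) (T t) * deriv T t * I₀ t + deriv F (T t) * deriv I₀ t := by
    rw [deriv_fun_mul hgcomp hI₀t, egcomp]
  have hfac : DifferentiableAt ℝ (fun s => T s * deriv F (T s) - 2 * F (T s)) t :=
    (hTt.mul hgcomp).sub (hcomp.const_mul 2)
  have e3 : deriv (fun s => (T s * deriv F (T s) - 2 * F (T s)) * I₀ s) t
      = (deriv T t * deriv F (T t) + T t * (deriv (deriv F) (T t) * deriv T t)
          - 2 * (deriv F (T t) * deriv T t)) * I₀ t
        + (T t * deriv F (T t) - 2 * F (T t)) * deriv I₀ t := by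
    rw [deriv_fun_mul hfac hI₀t, deriv_fun_sub (f := fun s => T s * deriv F (T s)) (hTt.mul hgcomp) (hcomp.const_mul 2),
      deriv_fun_mul hTt hgcomp, deriv_const_mul 2 hcomp, ecomp, egcomp]
  rw [e1, e2, e3]
  ring
end

section
/- Let a₀, a₁, a₂, a₃ be smooth real functions on an open interval J, let f, g : J → ℝ be smooth solutions of y'''' + a₃y''' + a₂y'' + a₁y' + a₀y = 0, and let u₁,…,u₆ be the six Wronskians of (f,g). Set U = u₁‴ + a₃u₁″ + a₂u₁′ + a₁u₁ and C₁ = a₃′ + (1/2)a₃² − 2a₂. Then on J: (i) U = a₃u₄ + 2u₅, and (ii) U′ + (1/2)a₃U = C₁u₄ + 2a₀u₁ + 2u₆. -/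
private lemma smoothIter {S : Set ℝ} (hS : IsOpen S) {f : ℝ → ℝ}
    (hf : ContDiffOn ℝ (⊤ : ℕ∞) f S) (n : ℕ) :
    ContDiffOn ℝ (⊤ : ℕ∞) (iteratedDeriv n f) S := by
  induction n with
  | zero => simpa [iteratedDeriv_zero] using hf
  | succ n ih =>
    rw [iteratedDeriv_succ]
    exact ih.deriv_of_isOpen hS (by exact_mod_cast le_top)

private lemma diffIter {S : Set ℝ} (hS : IsOpen S) {f : ℝ → ℝ}
    (hf : ContDiffOn ℝ (⊤ : ℕ∞) f S) (n : ℕ) {t : ℝ} (ht : t ∈ S) :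
    DifferentiableAt ℝ (iteratedDeriv n f) t :=
  (((smoothIter hS hf n).differentiableOn (by simp)) t ht).differentiableAt (hS.mem_nhds ht)

private lemma diffWr {S : Set ℝ} (hS : IsOpen S) {f g : ℝ → ℝ}
    (hf : ContDiffOn ℝ (⊤ : ℕ∞) f S) (hg : ContDiffOn ℝ (⊤ : ℕ∞) g S)
    (i j k l : ℕ) {t : ℝ} (ht : t ∈ S) :
    DifferentiableAt ℝ (fun s => iteratedDeriv i f s * iteratedDeriv j g s
        - iteratedDeriv k f s * iteratedDeriv l g s) t :=
  (((diffIter hS hf i ht).mul (diffIter hS hg j ht)).sub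
    ((diffIter hS hf k ht).mul (diffIter hS hg l ht)))

private lemma derivWr {S : Set ℝ} (hS : IsOpen S) {f g : ℝ → ℝ}
    (hf : ContDiffOn ℝ (⊤ : ℕ∞) f S) (hg : ContDiffOn ℝ (⊤ : ℕ∞) g S)
    (i j k l : ℕ) {t : ℝ} (ht : t ∈ S) :
    deriv (fun s => iteratedDeriv i f s * iteratedDeriv j g s
        - iteratedDeriv k f s * iteratedDeriv l g s) t =
      (iteratedDeriv (i+1) f t * iteratedDeriv j g t
        + iteratedDeriv i f t * iteratedDeriv (j+1) g t)
      - (iteratedDeriv (k+1) f t * iteratedDeriv l g t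
        + iteratedDeriv k f t * iteratedDeriv (l+1) g t) := by
  rw [deriv_fun_sub ((diffIter hS hf i ht).fun_mul (diffIter hS hg j ht))
      ((diffIter hS hf k ht).fun_mul (diffIter hS hg l ht)),
    deriv_fun_mul (diffIter hS hf i ht) (diffIter hS hg j ht),
    deriv_fun_mul (diffIter hS hf k ht) (diffIter hS hg l ht),
    iteratedDeriv_succ, iteratedDeriv_succ, iteratedDeriv_succ, iteratedDeriv_succ]

/-- For two smooth solutions of `y'''' + a₃y''' + a₂y'' + a₁y' + a₀y = 0` with Wronskians
`u₁,…,u₆`, setting `U = u₁‴ + a₃u₁″ + a₂u₁′ + a₁u₁` and `C₁ = a₃′ + (1/2)a₃² − 2a₂`, one has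
`U = a₃u₄ + 2u₅` and `U′ + (1/2)a₃U = C₁u₄ + 2a₀u₁ + 2u₆`. -/
theorem stmt_11 (A B : ℝ)
    (a₀ a₁ a₂ a₃ f g : ℝ → ℝ)
    (ha₀ : ContDiffOn ℝ (⊤ : ℕ∞) a₀ (Set.Ioo A B))
    (ha₁ : ContDiffOn ℝ (⊤ : ℕ∞) a₁ (Set.Ioo A B))
    (ha₂ : ContDiffOn ℝ (⊤ : ℕ∞) a₂ (Set.Ioo A B))
    (ha₃ : ContDiffOn ℝ (⊤ : ℕ∞) a₃ (Set.Ioo A B))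
    (hf : ContDiffOn ℝ (⊤ : ℕ∞) f (Set.Ioo A B))
    (hg : ContDiffOn ℝ (⊤ : ℕ∞) g (Set.Ioo A B))
    (hfsol : ∀ t ∈ Set.Ioo A B, iteratedDeriv 4 f t + a₃ t * iteratedDeriv 3 f t +
      a₂ t * iteratedDeriv 2 f t + a₁ t * deriv f t + a₀ t * f t = 0)
    (hgsol : ∀ t ∈ Set.Ioo A B, iteratedDeriv 4 g t + a₃ t * iteratedDeriv 3 g t +
      a₂ t * iteratedDeriv 2 g t + a₁ t * deriv g t + a₀ t * g t = 0)
    (u₁ u₄ u₅ u₆ : ℝ → ℝ)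
    (hu₁ : u₁ = fun t => f t * deriv g t - deriv f t * g t)
    (hu₄ : u₄ = fun t => deriv f t * iteratedDeriv 2 g t - iteratedDeriv 2 f t * deriv g t)
    (hu₅ : u₅ = fun t => deriv f t * iteratedDeriv 3 g t - iteratedDeriv 3 f t * deriv g t)
    (hu₆ : u₆ = fun t => iteratedDeriv 2 f t * iteratedDeriv 3 g t -
      iteratedDeriv 3 f t * iteratedDeriv 2 g t)
    (U C₁ : ℝ → ℝ)
    (hU : U = fun t => iteratedDeriv 3 u₁ t + a₃ t * iteratedDeriv 2 u₁ t +
      a₂ t * deriv u₁ t + a₁ t * u₁ t)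
    (hC₁ : C₁ = fun t => deriv a₃ t + (1 / 2) * (a₃ t) ^ 2 - 2 * a₂ t) :
    ∀ t ∈ Set.Ioo A B,
      U t = a₃ t * u₄ t + 2 * u₅ t ∧
      deriv U t + (1 / 2) * a₃ t * U t = C₁ t * u₄ t + 2 * a₀ t * u₁ t + 2 * u₆ t := by
  have hS : IsOpen (Set.Ioo A B) := isOpen_Ioo
  -- first derivative of u₁ on the interval
  have hd1 : ∀ s ∈ Set.Ioo A B, deriv u₁ s =
      f s * iteratedDeriv 2 g s - iteratedDeriv 2 f s * g s := by
    intro s hs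
    have h := derivWr hS hf hg 0 1 1 0 hs
    simp only [iteratedDeriv_zero, iteratedDeriv_one, zero_add, Nat.reduceAdd] at h
    rw [hu₁, h]; ring
  -- second derivative of u₁ on the interval
  have hd2 : ∀ s ∈ Set.Ioo A B, iteratedDeriv 2 u₁ s =
      (f s * iteratedDeriv 3 g s - iteratedDeriv 3 f s * g s)
      + (deriv f s * iteratedDeriv 2 g s - iteratedDeriv 2 f s * deriv g s) := by
    intro s hs
    have he : deriv u₁ =ᶠ[nhds s]
        (fun r => iteratedDeriv 0 f r * iteratedDeriv 2 g r
          - iteratedDeriv 2 f r * iteratedDeriv 0 g r) := by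
      filter_upwards [hS.mem_nhds hs] with r hr
      simpa [iteratedDeriv_zero] using hd1 r hr
    rw [show (2 : ℕ) = 1 + 1 from rfl, iteratedDeriv_succ, iteratedDeriv_one,
      he.deriv_eq, derivWr hS hf hg 0 2 2 0 hs]
    simp only [iteratedDeriv_zero, iteratedDeriv_one, zero_add, Nat.reduceAdd]
    ring
  -- third derivative of u₁ on the interval
  have hd3 : ∀ s ∈ Set.Ioo A B, iteratedDeriv 3 u₁ s =
      (f s * iteratedDeriv 4 g s - iteratedDeriv 4 f s * g s)
      + 2 * (deriv f s * iteratedDeriv 3 g s - iteratedDeriv 3 f s * deriv g s) := by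
    intro s hs
    have he : iteratedDeriv 2 u₁ =ᶠ[nhds s]
        (fun r => (iteratedDeriv 0 f r * iteratedDeriv 3 g r
            - iteratedDeriv 3 f r * iteratedDeriv 0 g r)
          + (iteratedDeriv 1 f r * iteratedDeriv 2 g r
            - iteratedDeriv 2 f r * iteratedDeriv 1 g r)) := by
      filter_upwards [hS.mem_nhds hs] with r hr
      simpa [iteratedDeriv_zero, iteratedDeriv_one] using hd2 r hr
    rw [show (3 : ℕ) = 2 + 1 from rfl, iteratedDeriv_succ, he.deriv_eq,
      deriv_fun_add (diffWr hS hf hg 0 3 3 0 hs) (diffWr hS hf hg 1 2 2 1 hs),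
      derivWr hS hf hg 0 3 3 0 hs, derivWr hS hf hg 1 2 2 1 hs]
    simp only [iteratedDeriv_zero, iteratedDeriv_one, zero_add, Nat.reduceAdd]
    ring
  -- Part (i), for every point of the interval
  have hUeq : ∀ s ∈ Set.Ioo A B, U s = a₃ s * u₄ s + 2 * u₅ s := by
    intro s hs
    have hF4 : iteratedDeriv 4 f s = -(a₃ s * iteratedDeriv 3 f s +
        a₂ s * iteratedDeriv 2 f s + a₁ s * deriv f s + a₀ s * f s) := by
      have := hfsol s hs; linarith
    have hG4 : iteratedDeriv 4 g s = -(a₃ s * iteratedDeriv 3 g s +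
        a₂ s * iteratedDeriv 2 g s + a₁ s * deriv g s + a₀ s * g s) := by
      have := hgsol s hs; linarith
    rw [hU]
    simp only
    rw [hd3 s hs, hd2 s hs, hd1 s hs, hF4, hG4, hu₁, hu₄, hu₅]
    simp only
    ring
  intro t ht
  refine ⟨hUeq t ht, ?_⟩
  -- derivative of U at t
  have he : U =ᶠ[nhds t]
      (fun r => a₃ r * (iteratedDeriv 1 f r * iteratedDeriv 2 g r
          - iteratedDeriv 2 f r * iteratedDeriv 1 g r)
        + 2 * (iteratedDeriv 1 f r * iteratedDeriv 3 g r
          - iteratedDeriv 3 f r * iteratedDeriv 1 g r)) := by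
    filter_upwards [hS.mem_nhds ht] with r hr
    rw [hUeq r hr, hu₄, hu₅]
    simp [iteratedDeriv_one]
  have ha₃t : DifferentiableAt ℝ a₃ t :=
    ((ha₃.differentiableOn (by simp)) t ht).differentiableAt (hS.mem_nhds ht)
  have hdU : deriv U t =
      deriv a₃ t * (deriv f t * iteratedDeriv 2 g t - iteratedDeriv 2 f t * deriv g t)
      + a₃ t * ((iteratedDeriv 2 f t * iteratedDeriv 2 g t
          + deriv f t * iteratedDeriv 3 g t)
        - (iteratedDeriv 3 f t * deriv g t + iteratedDeriv 2 f t * iteratedDeriv 2 g t))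
      + 2 * ((iteratedDeriv 2 f t * iteratedDeriv 3 g t
          + deriv f t * iteratedDeriv 4 g t)
        - (iteratedDeriv 4 f t * deriv g t + iteratedDeriv 3 f t * iteratedDeriv 2 g t)) := by
    rw [he.deriv_eq,
      deriv_fun_add (ha₃t.fun_mul (diffWr hS hf hg 1 2 2 1 ht))
        ((diffWr hS hf hg 1 3 3 1 ht).const_mul 2),
      deriv_fun_mul ha₃t (diffWr hS hf hg 1 2 2 1 ht),
      deriv_const_mul 2 (diffWr hS hf hg 1 3 3 1 ht),
      derivWr hS hf hg 1 2 2 1 ht, derivWr hS hf hg 1 3 3 1 ht]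
    simp only [iteratedDeriv_zero, iteratedDeriv_one, zero_add, Nat.reduceAdd]
  have hF4 : iteratedDeriv 4 f t = -(a₃ t * iteratedDeriv 3 f t +
      a₂ t * iteratedDeriv 2 f t + a₁ t * deriv f t + a₀ t * f t) := by
    have := hfsol t ht; linarith
  have hG4 : iteratedDeriv 4 g t = -(a₃ t * iteratedDeriv 3 g t +
      a₂ t * iteratedDeriv 2 g t + a₁ t * deriv g t + a₀ t * g t) := by
    have := hgsol t ht; linarith
  rw [hdU, hUeq t ht, hF4, hG4, hC₁, hu₁, hu₄, hu₅, hu₆]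
  simp only
  ring
end

section
/- (Yukawa coupling formula.) Given a special-geometry solution datum (J, I₀, T, F) for the quintic Picard–Fuchs operator, the function t ↦ (1 − α(t))·I₀(t)²·T′(t)³·F′′′(T(t)) has identically zero derivative on J, i.e. is locally constant; equivalently, the b₃-relation ∂_t log F_{TTT} + 2∂_t log I₀ + 3∂_t log T′ = C holds on J, where C = α/(1−α). -/
private lemma hda_congr {f : ℝ → ℝ} {x a b : ℝ} (h : HasDerivAt f a x) (e : a = b) :
    HasDerivAt f b x := e ▸ h

private lemma smooth_iter {f : ℝ → ℝ} {U : Set ℝ} (hU : IsOpen U)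
    (hf : ContDiffOn ℝ (⊤ : ℕ∞) f U) (k : ℕ) : ContDiffOn ℝ (⊤ : ℕ∞) (iteratedDeriv k f) U := by
  induction k with
  | zero => simpa [iteratedDeriv_zero] using hf
  | succ n ih => rw [iteratedDeriv_succ]; exact ih.deriv_of_isOpen hU (by simp)

private lemma hasDeriv_iter {f : ℝ → ℝ} {U : Set ℝ} (hU : IsOpen U)
    (hf : ContDiffOn ℝ (⊤ : ℕ∞) f U) (k : ℕ) :
    ∀ s ∈ U, HasDerivAt (iteratedDeriv k f) (iteratedDeriv (k + 1) f s) s := by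
  intro s hs
  have h1 : DifferentiableAt ℝ (iteratedDeriv k f) s :=
    ((smooth_iter hU hf k).differentiableOn (by simp)).differentiableAt (hU.mem_nhds hs)
  rw [iteratedDeriv_succ]
  exact h1.hasDerivAt

private lemma iter_chain {U : Set ℝ} (hU : IsOpen U) {f g1 g2 g3 g4 : ℝ → ℝ}
    (h1 : ∀ s ∈ U, HasDerivAt f (g1 s) s) (h2 : ∀ s ∈ U, HasDerivAt g1 (g2 s) s)
    (h3 : ∀ s ∈ U, HasDerivAt g2 (g3 s) s) (h4 : ∀ s ∈ U, HasDerivAt g3 (g4 s) s) :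
    ∀ t ∈ U, deriv f t = g1 t ∧ iteratedDeriv 2 f t = g2 t ∧
      iteratedDeriv 3 f t = g3 t ∧ iteratedDeriv 4 f t = g4 t := by
  have e1 : ∀ t ∈ U, deriv f t = g1 t := fun t ht => (h1 t ht).deriv
  have e2 : ∀ t ∈ U, iteratedDeriv 2 f t = g2 t := by
    intro t ht
    have hev : deriv f =ᶠ[nhds t] g1 :=
      Filter.eventually_of_mem (hU.mem_nhds ht) (fun s hs => e1 s hs)
    rw [show (2 : ℕ) = 1 + 1 from rfl, iteratedDeriv_succ, iteratedDeriv_one, hev.deriv_eq]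
    exact (h2 t ht).deriv
  have e3 : ∀ t ∈ U, iteratedDeriv 3 f t = g3 t := by
    intro t ht
    have hev : iteratedDeriv 2 f =ᶠ[nhds t] g2 :=
      Filter.eventually_of_mem (hU.mem_nhds ht) (fun s hs => e2 s hs)
    rw [show (3 : ℕ) = 2 + 1 from rfl, iteratedDeriv_succ, hev.deriv_eq]
    exact (h3 t ht).deriv
  have e4 : ∀ t ∈ U, iteratedDeriv 4 f t = g4 t := by
    intro t ht
    have hev : iteratedDeriv 3 f =ᶠ[nhds t] g3 :=
      Filter.eventually_of_mem (hU.mem_nhds ht) (fun s hs => e3 s hs)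
    rw [show (4 : ℕ) = 3 + 1 from rfl, iteratedDeriv_succ, hev.deriv_eq]
    exact (h4 t ht).deriv
  exact fun t ht => ⟨e1 t ht, e2 t ht, e3 t ht, e4 t ht⟩

/-- Yukawa coupling formula: for a special-geometry solution datum of the quintic
Picard–Fuchs operator, `(1−α)·I₀²·(T′)³·F‴(T)` has identically zero derivative on `J`;
this is the `b₃`-relation `∂_t log F_TTT + 2∂_t log I₀ + 3∂_t log T′ = C`. -/
theorem stmt_14 (A B : ℝ)
    (α : ℝ → ℝ) (hα : ∀ t, α t = 5 ^ 5 * Real.exp t)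
    (L : (ℝ → ℝ) → ℝ → ℝ)
    (hL : ∀ y t, L y t = (1 - α t) * iteratedDeriv 4 y t -
      α t * (2 * iteratedDeriv 3 y t + (7 / 5) * iteratedDeriv 2 y t +
        (2 / 5) * deriv y t + (24 / 625) * y t))
    (hα1 : ∀ t ∈ Set.Ioo A B, α t ≠ 1)
    (I₀ T : ℝ → ℝ)
    (hI₀s : ContDiffOn ℝ (⊤ : ℕ∞) I₀ (Set.Ioo A B))
    (hTs : ContDiffOn ℝ (⊤ : ℕ∞) T (Set.Ioo A B))
    (hI₀0 : ∀ t ∈ Set.Ioo A B, I₀ t ≠ 0)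
    (hT' : ∀ t ∈ Set.Ioo A B, deriv T t ≠ 0)
    (c d : ℝ) (hTJ : ∀ t ∈ Set.Ioo A B, T t ∈ Set.Ioo c d)
    (F : ℝ → ℝ) (hFs : ContDiffOn ℝ (⊤ : ℕ∞) F (Set.Ioo c d))
    (hF3 : ∀ x ∈ Set.Ioo c d, iteratedDeriv 3 F x ≠ 0)
    (hsol0 : ∀ t ∈ Set.Ioo A B, L I₀ t = 0)
    (hsol1 : ∀ t ∈ Set.Ioo A B, L (fun s => T s * I₀ s) t = 0)
    (hsol2 : ∀ t ∈ Set.Ioo A B, L (fun s => deriv F (T s) * I₀ s) t = 0)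
    (hsol3 : ∀ t ∈ Set.Ioo A B,
      L (fun s => (T s * deriv F (T s) - 2 * F (T s)) * I₀ s) t = 0) :
    ∀ t ∈ Set.Ioo A B,
      deriv (fun s => (1 - α s) * I₀ s ^ 2 * (deriv T s) ^ 3 * iteratedDeriv 3 F (T s)) t
        = 0 := by
  intro t ht
  set U : Set ℝ := Set.Ioo A B with hUdef
  have hUo : IsOpen U := isOpen_Ioo
  have hVo : IsOpen (Set.Ioo c d) := isOpen_Ioo
  have hαd : ∀ s : ℝ, HasDerivAt α (α s) s := by
    intro s
    have h2 : α = fun u => (5 : ℝ) ^ 5 * Real.exp u := funext hα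
    rw [h2]
    simpa using (Real.hasDerivAt_exp s).const_mul ((5 : ℝ) ^ 5)
  have hI0 : ∀ s ∈ U, HasDerivAt I₀ (deriv I₀ s) s := by
    simpa [iteratedDeriv_zero, iteratedDeriv_one] using hasDeriv_iter hUo hI₀s 0
  have hI1 : ∀ s ∈ U, HasDerivAt (deriv I₀) (iteratedDeriv 2 I₀ s) s := by
    simpa [iteratedDeriv_one] using hasDeriv_iter hUo hI₀s 1
  have hI2 : ∀ s ∈ U, HasDerivAt (iteratedDeriv 2 I₀) (iteratedDeriv 3 I₀ s) s := by
    simpa using hasDeriv_iter hUo hI₀s 2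
  have hI3 : ∀ s ∈ U, HasDerivAt (iteratedDeriv 3 I₀) (iteratedDeriv 4 I₀ s) s := by
    simpa using hasDeriv_iter hUo hI₀s 3
  have hT0 : ∀ s ∈ U, HasDerivAt T (deriv T s) s := by
    simpa [iteratedDeriv_zero, iteratedDeriv_one] using hasDeriv_iter hUo hTs 0
  have hT1 : ∀ s ∈ U, HasDerivAt (deriv T) (iteratedDeriv 2 T s) s := by
    simpa [iteratedDeriv_one] using hasDeriv_iter hUo hTs 1
  have hT2 : ∀ s ∈ U, HasDerivAt (iteratedDeriv 2 T) (iteratedDeriv 3 T s) s := by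
    simpa using hasDeriv_iter hUo hTs 2
  have hT3 : ∀ s ∈ U, HasDerivAt (iteratedDeriv 3 T) (iteratedDeriv 4 T s) s := by
    simpa using hasDeriv_iter hUo hTs 3
  have hF0 : ∀ x ∈ Set.Ioo c d, HasDerivAt F (deriv F x) x := by
    simpa [iteratedDeriv_zero, iteratedDeriv_one] using hasDeriv_iter hVo hFs 0
  have hF1 : ∀ x ∈ Set.Ioo c d, HasDerivAt (deriv F) (iteratedDeriv 2 F x) x := by
    simpa [iteratedDeriv_one] using hasDeriv_iter hVo hFs 1
  have hF2 : ∀ x ∈ Set.Ioo c d, HasDerivAt (iteratedDeriv 2 F) (iteratedDeriv 3 F x) x := by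
    simpa using hasDeriv_iter hVo hFs 2
  have hF3' : ∀ x ∈ Set.Ioo c d, HasDerivAt (iteratedDeriv 3 F) (iteratedDeriv 4 F x) x := by
    simpa using hasDeriv_iter hVo hFs 3
  have hF4 : ∀ x ∈ Set.Ioo c d, HasDerivAt (iteratedDeriv 4 F) (iteratedDeriv 5 F x) x := by
    simpa using hasDeriv_iter hVo hFs 4
  have hc0 : ∀ s ∈ U, HasDerivAt (fun s => F (T s)) (deriv F (T s) * deriv T s) s :=
    fun s hs => (hF0 _ (hTJ s hs)).comp s (hT0 s hs)
  have hc1 : ∀ s ∈ U, HasDerivAt (fun s => deriv F (T s))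
      (iteratedDeriv 2 F (T s) * deriv T s) s :=
    fun s hs => (hF1 _ (hTJ s hs)).comp s (hT0 s hs)
  have hc2 : ∀ s ∈ U, HasDerivAt (fun s => iteratedDeriv 2 F (T s))
      (iteratedDeriv 3 F (T s) * deriv T s) s :=
    fun s hs => (hF2 _ (hTJ s hs)).comp s (hT0 s hs)
  have hc3 : ∀ s ∈ U, HasDerivAt (fun s => iteratedDeriv 3 F (T s))
      (iteratedDeriv 4 F (T s) * deriv T s) s :=
    fun s hs => (hF3' _ (hTJ s hs)).comp s (hT0 s hs)
  have hc4 : ∀ s ∈ U, HasDerivAt (fun s => iteratedDeriv 4 F (T s))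
      (iteratedDeriv 5 F (T s) * deriv T s) s :=
    fun s hs => (hF4 _ (hTJ s hs)).comp s (hT0 s hs)
  have ch11 : ∀ s ∈ U, HasDerivAt (fun s => T s * I₀ s)
      (I₀ s * deriv T s + deriv I₀ s * T s) s :=
    fun s hs => hda_congr ((hT0 s hs).mul (hI0 s hs)) (by ring)
  have ch12 : ∀ s ∈ U, HasDerivAt (fun s => I₀ s * deriv T s + deriv I₀ s * T s)
      (I₀ s * iteratedDeriv 2 T s + 2 * (deriv I₀ s * deriv T s) + iteratedDeriv 2 I₀ s * T s) s :=
    fun s hs => hda_congr (((hI0 s hs).mul (hT1 s hs)).add ((hI1 s hs).mul (hT0 s hs))) (by ring)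
  have ch13 : ∀ s ∈ U, HasDerivAt (fun s => I₀ s * iteratedDeriv 2 T s + 2 * (deriv I₀ s * deriv T s) + iteratedDeriv 2 I₀ s * T s)
      (I₀ s * iteratedDeriv 3 T s + 3 * (deriv I₀ s * iteratedDeriv 2 T s) + 3 * (iteratedDeriv 2 I₀ s * deriv T s) + iteratedDeriv 3 I₀ s * T s) s :=
    fun s hs => hda_congr ((((hI0 s hs).mul (hT2 s hs)).add (HasDerivAt.const_mul (2 : ℝ) ((hI1 s hs).mul (hT1 s hs)))).add ((hI2 s hs).mul (hT0 s hs))) (by ring)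
  have ch14 : ∀ s ∈ U, HasDerivAt (fun s => I₀ s * iteratedDeriv 3 T s + 3 * (deriv I₀ s * iteratedDeriv 2 T s) + 3 * (iteratedDeriv 2 I₀ s * deriv T s) + iteratedDeriv 3 I₀ s * T s)
      (I₀ s * iteratedDeriv 4 T s + 4 * (deriv I₀ s * iteratedDeriv 3 T s) + 6 * (iteratedDeriv 2 I₀ s * iteratedDeriv 2 T s) + 4 * (iteratedDeriv 3 I₀ s * deriv T s) + iteratedDeriv 4 I₀ s * T s) s :=
    fun s hs => hda_congr (((((hI0 s hs).mul (hT3 s hs)).add (HasDerivAt.const_mul (3 : ℝ) ((hI1 s hs).mul (hT2 s hs)))).add (HasDerivAt.const_mul (3 : ℝ) ((hI2 s hs).mul (hT1 s hs)))).add ((hI3 s hs).mul (hT0 s hs))) (by ring)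
  have ch21 : ∀ s ∈ U, HasDerivAt (fun s => deriv F (T s) * I₀ s)
      (I₀ s * deriv T s * iteratedDeriv 2 F (T s) + deriv I₀ s * deriv F (T s)) s :=
    fun s hs => hda_congr ((hc1 s hs).mul (hI0 s hs)) (by ring)
  have ch22 : ∀ s ∈ U, HasDerivAt (fun s => I₀ s * deriv T s * iteratedDeriv 2 F (T s) + deriv I₀ s * deriv F (T s))
      (I₀ s * deriv T s * deriv T s * iteratedDeriv 3 F (T s) + I₀ s * iteratedDeriv 2 T s * iteratedDeriv 2 F (T s) + 2 * (deriv I₀ s * deriv T s * iteratedDeriv 2 F (T s)) + iteratedDeriv 2 I₀ s * deriv F (T s)) s :=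
    fun s hs => hda_congr ((((hI0 s hs).mul (hT1 s hs)).mul (hc2 s hs)).add ((hI1 s hs).mul (hc1 s hs))) (by simp only [Pi.add_apply, Pi.sub_apply, Pi.mul_apply]; ring)
  have ch23 : ∀ s ∈ U, HasDerivAt (fun s => I₀ s * deriv T s * deriv T s * iteratedDeriv 3 F (T s) + I₀ s * iteratedDeriv 2 T s * iteratedDeriv 2 F (T s) + 2 * (deriv I₀ s * deriv T s * iteratedDeriv 2 F (T s)) + iteratedDeriv 2 I₀ s * deriv F (T s))
      (I₀ s * deriv T s * deriv T s * deriv T s * iteratedDeriv 4 F (T s) + 3 * (I₀ s * deriv T s * iteratedDeriv 2 T s * iteratedDeriv 3 F (T s)) + I₀ s * iteratedDeriv 3 T s * iteratedDeriv 2 F (T s) + 3 * (deriv I₀ s * deriv T s * deriv T s * iteratedDeriv 3 F (T s)) + 3 * (deriv I₀ s * iteratedDeriv 2 T s * iteratedDeriv 2 F (T s)) + 3 * (iteratedDeriv 2 I₀ s * deriv T s * iteratedDeriv 2 F (T s)) + iteratedDeriv 3 I₀ s * deriv F (T s)) s :=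
    fun s hs => hda_congr (((((((hI0 s hs).mul (hT1 s hs)).mul (hT1 s hs)).mul (hc3 s hs)).add (((hI0 s hs).mul (hT2 s hs)).mul (hc2 s hs))).add (HasDerivAt.const_mul (2 : ℝ) (((hI1 s hs).mul (hT1 s hs)).mul (hc2 s hs)))).add ((hI2 s hs).mul (hc1 s hs))) (by simp only [Pi.add_apply, Pi.sub_apply, Pi.mul_apply]; ring)
  have ch24 : ∀ s ∈ U, HasDerivAt (fun s => I₀ s * deriv T s * deriv T s * deriv T s * iteratedDeriv 4 F (T s) + 3 * (I₀ s * deriv T s * iteratedDeriv 2 T s * iteratedDeriv 3 F (T s)) + I₀ s * iteratedDeriv 3 T s * iteratedDeriv 2 F (T s) + 3 * (deriv I₀ s * deriv T s * deriv T s * iteratedDeriv 3 F (T s)) + 3 * (deriv I₀ s * iteratedDeriv 2 T s * iteratedDeriv 2 F (T s)) + 3 * (iteratedDeriv 2 I₀ s * deriv T s * iteratedDeriv 2 F (T s)) + iteratedDeriv 3 I₀ s * deriv F (T s))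
      (I₀ s * deriv T s * deriv T s * deriv T s * deriv T s * iteratedDeriv 5 F (T s) + 6 * (I₀ s * deriv T s * deriv T s * iteratedDeriv 2 T s * iteratedDeriv 4 F (T s)) + 4 * (I₀ s * deriv T s * iteratedDeriv 3 T s * iteratedDeriv 3 F (T s)) + 3 * (I₀ s * iteratedDeriv 2 T s * iteratedDeriv 2 T s * iteratedDeriv 3 F (T s)) + I₀ s * iteratedDeriv 4 T s * iteratedDeriv 2 F (T s) + 4 * (deriv I₀ s * deriv T s * deriv T s * deriv T s * iteratedDeriv 4 F (T s)) + 12 * (deriv I₀ s * deriv T s * iteratedDeriv 2 T s * iteratedDeriv 3 F (T s)) + 4 * (deriv I₀ s * iteratedDeriv 3 T s * iteratedDeriv 2 F (T s)) + 6 * (iteratedDeriv 2 I₀ s * deriv T s * deriv T s * iteratedDeriv 3 F (T s)) + 6 * (iteratedDeriv 2 I₀ s * iteratedDeriv 2 T s * iteratedDeriv 2 F (T s)) + 4 * (iteratedDeriv 3 I₀ s * deriv T s * iteratedDeriv 2 F (T s)) + iteratedDeriv 4 I₀ s * deriv F (T s)) s :=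
    fun s hs => hda_congr (((((((((((hI0 s hs).mul (hT1 s hs)).mul (hT1 s hs)).mul (hT1 s hs)).mul (hc4 s hs)).add (HasDerivAt.const_mul (3 : ℝ) ((((hI0 s hs).mul (hT1 s hs)).mul (hT2 s hs)).mul (hc3 s hs)))).add (((hI0 s hs).mul (hT3 s hs)).mul (hc2 s hs))).add (HasDerivAt.const_mul (3 : ℝ) ((((hI1 s hs).mul (hT1 s hs)).mul (hT1 s hs)).mul (hc3 s hs)))).add (HasDerivAt.const_mul (3 : ℝ) (((hI1 s hs).mul (hT2 s hs)).mul (hc2 s hs)))).add (HasDerivAt.const_mul (3 : ℝ) (((hI2 s hs).mul (hT1 s hs)).mul (hc2 s hs)))).add ((hI3 s hs).mul (hc1 s hs))) (by simp only [Pi.add_apply, Pi.sub_apply, Pi.mul_apply]; ring)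
  have ch31 : ∀ s ∈ U, HasDerivAt (fun s => (T s * deriv F (T s) - 2 * F (T s)) * I₀ s)
      (I₀ s * T s * deriv T s * iteratedDeriv 2 F (T s) + deriv I₀ s * T s * deriv F (T s) - I₀ s * deriv T s * deriv F (T s) - 2 * (deriv I₀ s * F (T s))) s :=
    fun s hs => hda_congr ((((hT0 s hs).mul (hc1 s hs)).sub (HasDerivAt.const_mul (2:ℝ) (hc0 s hs))).mul (hI0 s hs)) (by simp only [Pi.add_apply, Pi.sub_apply, Pi.mul_apply]; ring)
  have ch32 : ∀ s ∈ U, HasDerivAt (fun s => I₀ s * T s * deriv T s * iteratedDeriv 2 F (T s) + deriv I₀ s * T s * deriv F (T s) - I₀ s * deriv T s * deriv F (T s) - 2 * (deriv I₀ s * F (T s)))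
      (I₀ s * T s * deriv T s * deriv T s * iteratedDeriv 3 F (T s) + I₀ s * T s * iteratedDeriv 2 T s * iteratedDeriv 2 F (T s) + 2 * (deriv I₀ s * T s * deriv T s * iteratedDeriv 2 F (T s)) + iteratedDeriv 2 I₀ s * T s * deriv F (T s) - I₀ s * iteratedDeriv 2 T s * deriv F (T s) - 2 * (deriv I₀ s * deriv T s * deriv F (T s)) - 2 * (iteratedDeriv 2 I₀ s * F (T s))) s :=
    fun s hs => hda_congr (((((((hI0 s hs).mul (hT0 s hs)).mul (hT1 s hs)).mul (hc2 s hs)).add (((hI1 s hs).mul (hT0 s hs)).mul (hc1 s hs))).sub (((hI0 s hs).mul (hT1 s hs)).mul (hc1 s hs))).sub (HasDerivAt.const_mul (2 : ℝ) ((hI1 s hs).mul (hc0 s hs)))) (by simp only [Pi.add_apply, Pi.sub_apply, Pi.mul_apply]; ring)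
  have ch33 : ∀ s ∈ U, HasDerivAt (fun s => I₀ s * T s * deriv T s * deriv T s * iteratedDeriv 3 F (T s) + I₀ s * T s * iteratedDeriv 2 T s * iteratedDeriv 2 F (T s) + 2 * (deriv I₀ s * T s * deriv T s * iteratedDeriv 2 F (T s)) + iteratedDeriv 2 I₀ s * T s * deriv F (T s) - I₀ s * iteratedDeriv 2 T s * deriv F (T s) - 2 * (deriv I₀ s * deriv T s * deriv F (T s)) - 2 * (iteratedDeriv 2 I₀ s * F (T s)))
      (I₀ s * T s * deriv T s * deriv T s * deriv T s * iteratedDeriv 4 F (T s) + 3 * (I₀ s * T s * deriv T s * iteratedDeriv 2 T s * iteratedDeriv 3 F (T s)) + I₀ s * T s * iteratedDeriv 3 T s * iteratedDeriv 2 F (T s) + I₀ s * deriv T s * deriv T s * deriv T s * iteratedDeriv 3 F (T s) + 3 * (deriv I₀ s * T s * deriv T s * deriv T s * iteratedDeriv 3 F (T s)) + 3 * (deriv I₀ s * T s * iteratedDeriv 2 T s * iteratedDeriv 2 F (T s)) + 3 * (iteratedDeriv 2 I₀ s * T s * deriv T s * iteratedDeriv 2 F (T s)) + iteratedDeriv 3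 I₀ s * T s * deriv F (T s) - I₀ s * iteratedDeriv 3 T s * deriv F (T s) - 3 * (deriv I₀ s * iteratedDeriv 2 T s * deriv F (T s)) - 3 * (iteratedDeriv 2 I₀ s * deriv T s * deriv F (T s)) - 2 * (iteratedDeriv 3 I₀ s * F (T s))) s :=
    fun s hs => hda_congr (((((((((((hI0 s hs).mul (hT0 s hs)).mul (hT1 s hs)).mul (hT1 s hs)).mul (hc3 s hs)).add ((((hI0 s hs).mul (hT0 s hs)).mul (hT2 s hs)).mul (hc2 s hs))).add (HasDerivAt.const_mul (2 : ℝ) ((((hI1 s hs).mul (hT0 s hs)).mul (hT1 s hs)).mul (hc2 s hs)))).add (((hI2 s hs).mul (hT0 s hs)).mul (hc1 s hs))).sub (((hI0 s hs).mul (hT2 s hs)).mul (hc1 s hs))).sub (HasDerivAt.const_mul (2 : ℝ) (((hI1 s hs).mul (hT1 s hs)).mul (hc1 s hs)))).sub (HasDerivAt.const_mul (2 : ℝ) ((hI2 s hs).mul (hc0 s hs)))) (by simp only [Pi.add_apply, Pi.sub_apply, Pi.mul_apply]; ring)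
  have ch34 : ∀ s ∈ U, HasDerivAt (fun s => I₀ s * T s * deriv T s * deriv T s * deriv T s * iteratedDeriv 4 F (T s) + 3 * (I₀ s * T s * deriv T s * iteratedDeriv 2 T s * iteratedDeriv 3 F (T s)) + I₀ s * T s * iteratedDeriv 3 T s * iteratedDeriv 2 F (T s) + I₀ s * deriv T s * deriv T s * deriv T s * iteratedDeriv 3 F (T s) + 3 * (deriv I₀ s * T s * deriv T s * deriv T s * iteratedDeriv 3 F (T s)) + 3 * (deriv I₀ s * T s * iteratedDeriv 2 T s * iteratedDeriv 2 F (T s)) + 3 * (iteratedDeriv 2 I₀ s * T s * deriv T s * iteratedDeriv 2 F (T s)) + iteratedDeriv 3 I₀ s * T s * deriv F (T s) - I₀ s * iteratedDeriv 3 T s * deriv F (T s) - 3 * (deriv I₀ s * iteratedDeriv 2 T s * deriv F (T s)) - 3 * (iteratedDeriv 2 I₀ s * deriv T s * deriv F (T s)) - 2 * (iteratedDeriv 3 I₀ s * F (T s)))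
      (I₀ s * T s * deriv T s * deriv T s * deriv T s * deriv T s * iteratedDeriv 5 F (T s) + 6 * (I₀ s * T s * deriv T s * deriv T s * iteratedDeriv 2 T s * iteratedDeriv 4 F (T s)) + 4 * (I₀ s * T s * deriv T s * iteratedDeriv 3 T s * iteratedDeriv 3 F (T s)) + 3 * (I₀ s * T s * iteratedDeriv 2 T s * iteratedDeriv 2 T s * iteratedDeriv 3 F (T s)) + I₀ s * T s * iteratedDeriv 4 T s * iteratedDeriv 2 F (T s) + 2 * (I₀ s * deriv T s * deriv T s * deriv T s * deriv T s * iteratedDeriv 4 F (T s)) + 6 * (I₀ s * deriv T s * deriv T s * iteratedDeriv 2 T s * iteratedDeriv 3 F (T s)) + 4 * (deriv I₀ s * T s * deriv T s * deriv T s * deriv T s * iteratedDeriv 4 F (T s)) + 12 * (deriv I₀ s * T s * deriv T s * iteratedDeriv 2 T s * iteratedDeriv 3 F (T s)) + 4 * (deriv I₀ s * T s * iteratedDeriv 3 T s * iteratedDeriv 2 F (T s)) + 4 * (deriv I₀ s * deriv T s * deriv T s * deriv T s * iteratedDeriv 3 F (T s)) + 6 * (iteratedDeriv 2 I₀ s *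 T s * deriv T s * deriv T s * iteratedDeriv 3 F (T s)) + 6 * (iteratedDeriv 2 I₀ s * T s * iteratedDeriv 2 T s * iteratedDeriv 2 F (T s)) + 4 * (iteratedDeriv 3 I₀ s * T s * deriv T s * iteratedDeriv 2 F (T s)) + iteratedDeriv 4 I₀ s * T s * deriv F (T s) - I₀ s * iteratedDeriv 4 T s * deriv F (T s) - 4 * (deriv I₀ s * iteratedDeriv 3 T s * deriv F (T s)) - 6 * (iteratedDeriv 2 I₀ s * iteratedDeriv 2 T s * deriv F (T s)) - 4 * (iteratedDeriv 3 I₀ s * deriv T s * deriv F (T s)) - 2 * (iteratedDeriv 4 I₀ s * F (T s))) s :=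
    fun s hs => hda_congr (((((((((((((((((hI0 s hs).mul (hT0 s hs)).mul (hT1 s hs)).mul (hT1 s hs)).mul (hT1 s hs)).mul (hc4 s hs)).add (HasDerivAt.const_mul (3 : ℝ) (((((hI0 s hs).mul (hT0 s hs)).mul (hT1 s hs)).mul (hT2 s hs)).mul (hc3 s hs)))).add ((((hI0 s hs).mul (hT0 s hs)).mul (hT3 s hs)).mul (hc2 s hs))).add (((((hI0 s hs).mul (hT1 s hs)).mul (hT1 s hs)).mul (hT1 s hs)).mul (hc3 s hs))).add (HasDerivAt.const_mul (3 : ℝ) (((((hI1 s hs).mul (hT0 s hs)).mul (hT1 s hs)).mul (hT1 s hs)).mul (hc3 s hs)))).add (HasDerivAt.const_mul (3 : ℝ) ((((hI1 s hs).mul (hT0 s hs)).mul (hT2 s hs)).mul (hc2 s hs)))).add (HasDerivAt.const_mul (3 : ℝ) ((((hI2 s hs).mul (hT0 s hs)).mul (hT1 s hs)).mul (hc2 s hs)))).add (((hI3 s hs).mul (hT0 s hs)).mul (hc1 s hs))).sub (((hI0 s hs).mul (hT3 s hs)).mul (hc1 s hs))).sub (HasDerivAt.const_mul (3 : ℝ)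 (((hI1 s hs).mul (hT2 s hs)).mul (hc1 s hs)))).sub (HasDerivAt.const_mul (3 : ℝ) (((hI2 s hs).mul (hT1 s hs)).mul (hc1 s hs)))).sub (HasDerivAt.const_mul (2 : ℝ) ((hI3 s hs).mul (hc0 s hs)))) (by simp only [Pi.add_apply, Pi.sub_apply, Pi.mul_apply]; ring)
  obtain ⟨e11, e12, e13, e14⟩ := iter_chain hUo ch11 ch12 ch13 ch14 t ht
  obtain ⟨e21, e22, e23, e24⟩ := iter_chain hUo ch21 ch22 ch23 ch24 t ht
  obtain ⟨e31, e32, e33, e34⟩ := iter_chain hUo ch31 ch32 ch33 ch34 t ht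
  have h0 := hsol0 t ht
  have h1 := hsol1 t ht
  have h2 := hsol2 t ht
  have h3 := hsol3 t ht
  rw [hL] at h0 h1 h2 h3
  rw [e14, e13, e12, e11] at h1
  rw [e24, e23, e22, e21] at h2
  rw [e34, e33, e32, e31] at h3
  beta_reduce at h1 h2 h3
  have hfe : (fun s => (1 - α s) * I₀ s ^ 2 * (deriv T s) ^ 3 * iteratedDeriv 3 F (T s))
      = (fun s => (1 - α s) * (I₀ s * I₀ s) * (deriv T s * (deriv T s * deriv T s)) *
          iteratedDeriv 3 F (T s)) := by
    funext s; ring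
  have hW : HasDerivAt (fun s => (1 - α s) * (I₀ s * I₀ s) *
      (deriv T s * (deriv T s * deriv T s)) * iteratedDeriv 3 F (T s))
      ((1 - α t) * (I₀ t * I₀ t * deriv T t * deriv T t * deriv T t * deriv T t * iteratedDeriv 4 F (T t) + 3 * (I₀ t * I₀ t * deriv T t * deriv T t * iteratedDeriv 2 T t * iteratedDeriv 3 F (T t)) + 2 * (I₀ t * deriv I₀ t * deriv T t * deriv T t * deriv T t * iteratedDeriv 3 F (T t))) - α t * (I₀ t * I₀ t * (deriv T t * (deriv T t * deriv T t)) * iteratedDeriv 3 F (T t))) t :=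
    hda_congr (((((hαd t).const_sub 1).mul ((hI0 t ht).mul (hI0 t ht))).mul
      ((hT1 t ht).mul ((hT1 t ht).mul (hT1 t ht)))).mul (hc3 t ht)) (by simp only [Pi.add_apply, Pi.sub_apply, Pi.mul_apply]; ring)
  rw [hfe, hW.deriv]
  linear_combination (I₀ t / 2) * h3 - (I₀ t * T t / 2) * h2 +
    (I₀ t * deriv F (T t) / 2) * h1 -
    (I₀ t * (T t * deriv F (T t) - 2 * F (T t)) / 2) * h0
end

section
/- (Wronskian differences of two pairs of solutions.) Let a₀, a₁, a₂, a₃ be smooth real functions on an open interval J, and let (f, g) and (f̃, g̃) be two pairs of smooth solutions of y'''' + a₃y''' + a₂y'' + a₁y' + a₀y = 0 whose first Wronskians agree on J: f·g′ − f′·g = f̃·g̃′ − f̃′·g̃. Writing Δu_k for the difference of the k-th Wronskian of (f, g) and of (f̃, g̃), one has on J: Δu₂ = 0; Δu₄ = −Δu₃; 2·(Δu₃)′ = −a₃·Δu₃; and 2·Δu₆ = C₁·Δu₃, where C₁ = a₃′ + (1/2)a₃² − 2a₂. In particular Δu₃ is a solution of the first-order linear ODE 2y′ + a₃y = 0. 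-/
private lemma id2' (h : ℝ → ℝ) : iteratedDeriv 2 h = deriv (deriv h) := by
  rw [iteratedDeriv_eq_iterate]; rfl

private lemma id3' (h : ℝ → ℝ) : iteratedDeriv 3 h = deriv (deriv (deriv h)) := by
  rw [iteratedDeriv_eq_iterate]; rfl

private lemma id4' (h : ℝ → ℝ) : iteratedDeriv 4 h = deriv (deriv (deriv (deriv h))) := by
  rw [iteratedDeriv_eq_iterate]; rfl

private lemma diffAt_iter {S : Set ℝ} (hS : IsOpen S) {h : ℝ → ℝ}
    (hh : ContDiffOn ℝ (⊤ : ℕ∞) h S) {s : ℝ} (hs : s ∈ S) :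
    DifferentiableAt ℝ h s ∧ DifferentiableAt ℝ (deriv h) s ∧
      DifferentiableAt ℝ (deriv (deriv h)) s ∧
      DifferentiableAt ℝ (deriv (deriv (deriv h))) s := by
  have hle : ((⊤:ℕ∞) : WithTop ℕ∞) + 1 ≤ ((⊤:ℕ∞) : WithTop ℕ∞) := by exact_mod_cast le_top
  have hle1 : ((⊤:ℕ∞) : WithTop ℕ∞) ≠ 0 := by simp
  have h1 := hh.deriv_of_isOpen (m := (⊤:ℕ∞)) hS hle
  have h2 := h1.deriv_of_isOpen (m := (⊤:ℕ∞)) hS hle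
  have h3 := h2.deriv_of_isOpen (m := (⊤:ℕ∞)) hS hle
  exact ⟨(hh.differentiableOn hle1).differentiableAt (hS.mem_nhds hs),
    (h1.differentiableOn hle1).differentiableAt (hS.mem_nhds hs),
    (h2.differentiableOn hle1).differentiableAt (hS.mem_nhds hs),
    (h3.differentiableOn hle1).differentiableAt (hS.mem_nhds hs)⟩

/-- Wronskian differences of two pairs of solutions of
`y'''' + a₃y''' + a₂y'' + a₁y' + a₀y = 0` whose first Wronskians agree:
`Δu₂ = 0`, `Δu₄ = −Δu₃`, `2(Δu₃)′ = −a₃Δu₃`, and `2Δu₆ = C₁Δu₃` with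
`C₁ = a₃′ + (1/2)a₃² − 2a₂`. -/
theorem stmt_19 (A B : ℝ)
    (a₀ a₁ a₂ a₃ f g ft gt : ℝ → ℝ)
    (ha₀ : ContDiffOn ℝ (⊤ : ℕ∞) a₀ (Set.Ioo A B))
    (ha₁ : ContDiffOn ℝ (⊤ : ℕ∞) a₁ (Set.Ioo A B))
    (ha₂ : ContDiffOn ℝ (⊤ : ℕ∞) a₂ (Set.Ioo A B))
    (ha₃ : ContDiffOn ℝ (⊤ : ℕ∞) a₃ (Set.Ioo A B))
    (hf : ContDiffOn ℝ (⊤ : ℕ∞) f (Set.Ioo A B))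
    (hg : ContDiffOn ℝ (⊤ : ℕ∞) g (Set.Ioo A B))
    (hft : ContDiffOn ℝ (⊤ : ℕ∞) ft (Set.Ioo A B))
    (hgt : ContDiffOn ℝ (⊤ : ℕ∞) gt (Set.Ioo A B))
    (hfsol : ∀ t ∈ Set.Ioo A B, iteratedDeriv 4 f t + a₃ t * iteratedDeriv 3 f t +
      a₂ t * iteratedDeriv 2 f t + a₁ t * deriv f t + a₀ t * f t = 0)
    (hgsol : ∀ t ∈ Set.Ioo A B, iteratedDeriv 4 g t + a₃ t * iteratedDeriv 3 g t +
      a₂ t * iteratedDeriv 2 g t + a₁ t * deriv g t + a₀ t * g t = 0)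
    (hftsol : ∀ t ∈ Set.Ioo A B, iteratedDeriv 4 ft t + a₃ t * iteratedDeriv 3 ft t +
      a₂ t * iteratedDeriv 2 ft t + a₁ t * deriv ft t + a₀ t * ft t = 0)
    (hgtsol : ∀ t ∈ Set.Ioo A B, iteratedDeriv 4 gt t + a₃ t * iteratedDeriv 3 gt t +
      a₂ t * iteratedDeriv 2 gt t + a₁ t * deriv gt t + a₀ t * gt t = 0)
    (hu1 : ∀ t ∈ Set.Ioo A B,
      f t * deriv g t - deriv f t * g t = ft t * deriv gt t - deriv ft t * gt t)
    (Δu₂ Δu₃ Δu₄ Δu₆ C₁ : ℝ → ℝ)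
    (hΔu₂ : Δu₂ = fun t => (f t * iteratedDeriv 2 g t - iteratedDeriv 2 f t * g t) -
      (ft t * iteratedDeriv 2 gt t - iteratedDeriv 2 ft t * gt t))
    (hΔu₃ : Δu₃ = fun t => (f t * iteratedDeriv 3 g t - iteratedDeriv 3 f t * g t) -
      (ft t * iteratedDeriv 3 gt t - iteratedDeriv 3 ft t * gt t))
    (hΔu₄ : Δu₄ = fun t =>
      (deriv f t * iteratedDeriv 2 g t - iteratedDeriv 2 f t * deriv g t) -
      (deriv ft t * iteratedDeriv 2 gt t - iteratedDeriv 2 ft t * deriv gt t))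
    (hΔu₆ : Δu₆ = fun t =>
      (iteratedDeriv 2 f t * iteratedDeriv 3 g t - iteratedDeriv 3 f t * iteratedDeriv 2 g t) -
      (iteratedDeriv 2 ft t * iteratedDeriv 3 gt t -
        iteratedDeriv 3 ft t * iteratedDeriv 2 gt t))
    (hC₁ : C₁ = fun t => deriv a₃ t + (1 / 2) * (a₃ t) ^ 2 - 2 * a₂ t) :
    ∀ t ∈ Set.Ioo A B,
      Δu₂ t = 0 ∧
      Δu₄ t = -Δu₃ t ∧
      2 * deriv Δu₃ t = -(a₃ t) * Δu₃ t ∧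
      2 * Δu₆ t = C₁ t * Δu₃ t := by
  subst hΔu₂ hΔu₃ hΔu₄ hΔu₆ hC₁
  have hS : IsOpen (Set.Ioo A B) := isOpen_Ioo
  simp only [id2', id3', id4'] at hfsol hgsol hftsol hgtsol ⊢
  -- step 1 : Δu₂ = 0 on S
  have key2 : ∀ s ∈ Set.Ioo A B,
      f s * deriv (deriv g) s - deriv (deriv f) s * g s
        = ft s * deriv (deriv gt) s - deriv (deriv ft) s * gt s := by
    intro s hs
    obtain ⟨hf0, hf1, hf2, hf3⟩ := diffAt_iter hS hf hs
    obtain ⟨hg0, hg1, hg2, hg3⟩ := diffAt_iter hS hg hs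
    obtain ⟨hp0, hp1, hp2, hp3⟩ := diffAt_iter hS hft hs
    obtain ⟨hq0, hq1, hq2, hq3⟩ := diffAt_iter hS hgt hs
    have e1 := ((hf0.hasDerivAt.mul hg1.hasDerivAt).sub
      (hf1.hasDerivAt.mul hg0.hasDerivAt)).deriv
    have e2 := ((hp0.hasDerivAt.mul hq1.hasDerivAt).sub
      (hp1.hasDerivAt.mul hq0.hasDerivAt)).deriv
    have heq : deriv (fun x => f x * deriv g x - deriv f x * g x) s
        = deriv (fun x => ft x * deriv gt x - deriv ft x * gt x) s :=
      (Filter.eventuallyEq_of_mem (hS.mem_nhds hs) (fun x hx => hu1 x hx)).deriv_eq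
    erw [e1, e2] at heq
    linarith
  -- step 2 : Δu₃ + Δu₄ = 0 on S
  have key34 : ∀ s ∈ Set.Ioo A B,
      (f s * deriv (deriv (deriv g)) s - deriv (deriv (deriv f)) s * g s)
        + (deriv f s * deriv (deriv g) s - deriv (deriv f) s * deriv g s)
      = (ft s * deriv (deriv (deriv gt)) s - deriv (deriv (deriv ft)) s * gt s)
        + (deriv ft s * deriv (deriv gt) s - deriv (deriv ft) s * deriv gt s) := by
    intro s hs
    obtain ⟨hf0, hf1, hf2, hf3⟩ := diffAt_iter hS hf hs
    obtain ⟨hg0, hg1, hg2, hg3⟩ := diffAt_iter hS hg hs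
    obtain ⟨hp0, hp1, hp2, hp3⟩ := diffAt_iter hS hft hs
    obtain ⟨hq0, hq1, hq2, hq3⟩ := diffAt_iter hS hgt hs
    have e1 := ((hf0.hasDerivAt.mul hg2.hasDerivAt).sub
      (hf2.hasDerivAt.mul hg0.hasDerivAt)).deriv
    have e2 := ((hp0.hasDerivAt.mul hq2.hasDerivAt).sub
      (hp2.hasDerivAt.mul hq0.hasDerivAt)).deriv
    have heq : deriv (fun x => f x * deriv (deriv g) x - deriv (deriv f) x * g x) s
        = deriv (fun x => ft x * deriv (deriv gt) x - deriv (deriv ft) x * gt x) s :=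
      (Filter.eventuallyEq_of_mem (hS.mem_nhds hs) (fun x hx => key2 x hx)).deriv_eq
    erw [e1, e2] at heq
    linarith
  -- step 3 : derivative of key34
  have keyd34 : ∀ s ∈ Set.Ioo A B,
      f s * deriv (deriv (deriv (deriv g))) s - deriv (deriv (deriv (deriv f))) s * g s
        + 2 * (deriv f s * deriv (deriv (deriv g)) s)
        - 2 * (deriv (deriv (deriv f)) s * deriv g s)
      = ft s * deriv (deriv (deriv (deriv gt))) s - deriv (deriv (deriv (deriv ft))) s * gt s
        + 2 * (deriv ft s * deriv (deriv (deriv gt)) s)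
        - 2 * (deriv (deriv (deriv ft)) s * deriv gt s) := by
    intro s hs
    obtain ⟨hf0, hf1, hf2, hf3⟩ := diffAt_iter hS hf hs
    obtain ⟨hg0, hg1, hg2, hg3⟩ := diffAt_iter hS hg hs
    obtain ⟨hp0, hp1, hp2, hp3⟩ := diffAt_iter hS hft hs
    obtain ⟨hq0, hq1, hq2, hq3⟩ := diffAt_iter hS hgt hs
    have e1 := (((hf0.hasDerivAt.mul hg3.hasDerivAt).sub
      (hf3.hasDerivAt.mul hg0.hasDerivAt)).add
      ((hf1.hasDerivAt.mul hg2.hasDerivAt).sub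
      (hf2.hasDerivAt.mul hg1.hasDerivAt))).deriv
    have e2 := (((hp0.hasDerivAt.mul hq3.hasDerivAt).sub
      (hp3.hasDerivAt.mul hq0.hasDerivAt)).add
      ((hp1.hasDerivAt.mul hq2.hasDerivAt).sub
      (hp2.hasDerivAt.mul hq1.hasDerivAt))).deriv
    have heq : deriv (fun x =>
        (f x * deriv (deriv (deriv g)) x - deriv (deriv (deriv f)) x * g x)
          + (deriv f x * deriv (deriv g) x - deriv (deriv f) x * deriv g x)) s
        = deriv (fun x =>
        (ft x * deriv (deriv (deriv gt)) x - deriv (deriv (deriv ft)) x * gt x)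
          + (deriv ft x * deriv (deriv gt) x - deriv (deriv ft) x * deriv gt x)) s :=
      (Filter.eventuallyEq_of_mem (hS.mem_nhds hs) (fun x hx => key34 x hx)).deriv_eq
    erw [e1, e2] at heq
    linarith
  -- step 4 : Δu₅ = (1/2) a₃ Δu₃ on S
  have key5 : ∀ s ∈ Set.Ioo A B,
      (deriv f s * deriv (deriv (deriv g)) s - deriv (deriv (deriv f)) s * deriv g s)
        - (deriv ft s * deriv (deriv (deriv gt)) s - deriv (deriv (deriv ft)) s * deriv gt s)
      = 1 / 2 * (a₃ s * ((f s * deriv (deriv (deriv g)) s - deriv (deriv (deriv f)) s * g s)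
          - (ft s * deriv (deriv (deriv gt)) s - deriv (deriv (deriv ft)) s * gt s))) := by
    intro s hs
    have K := keyd34 s hs
    have Pf := hfsol s hs
    have Pg := hgsol s hs
    have Pp := hftsol s hs
    have Pq := hgtsol s hs
    have K2 := key2 s hs
    have K1 := hu1 s hs
    linear_combination (1/2) * K - (1/2) * f s * Pg + (1/2) * g s * Pf
      + (1/2) * ft s * Pq - (1/2) * gt s * Pp + (1/2) * a₂ s * K2 + (1/2) * a₁ s * K1
  -- value of deriv Δu₃ on S
  have key3v : ∀ s ∈ Set.Ioo A B,
      (deriv f s * deriv (deriv (deriv g)) s + f s * deriv (deriv (deriv (deriv g))) s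
        - (deriv (deriv (deriv (deriv f))) s * g s + deriv (deriv (deriv f)) s * deriv g s))
      - (deriv ft s * deriv (deriv (deriv gt)) s + ft s * deriv (deriv (deriv (deriv gt))) s
        - (deriv (deriv (deriv (deriv ft))) s * gt s + deriv (deriv (deriv ft)) s * deriv gt s))
      = -(1 / 2) * (a₃ s * ((f s * deriv (deriv (deriv g)) s - deriv (deriv (deriv f)) s * g s)
          - (ft s * deriv (deriv (deriv gt)) s - deriv (deriv (deriv ft)) s * gt s))) := by
    intro s hs
    have K := keyd34 s hs
    have K5 := key5 s hs
    have Pf := hfsol s hs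
    have Pg := hgsol s hs
    have Pp := hftsol s hs
    have Pq := hgtsol s hs
    have K2 := key2 s hs
    have K1 := hu1 s hs
    linear_combination K5 + f s * Pg - g s * Pf - ft s * Pq + gt s * Pp
      - a₂ s * K2 - a₁ s * K1
  intro t ht
  obtain ⟨hf0, hf1, hf2, hf3⟩ := diffAt_iter hS hf ht
  obtain ⟨hg0, hg1, hg2, hg3⟩ := diffAt_iter hS hg ht
  obtain ⟨hp0, hp1, hp2, hp3⟩ := diffAt_iter hS hft ht
  obtain ⟨hq0, hq1, hq2, hq3⟩ := diffAt_iter hS hgt ht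
  have ha3d : DifferentiableAt ℝ a₃ t :=
    (ha₃.differentiableOn (by simp)).differentiableAt (hS.mem_nhds ht)
  -- HasDerivAt for Δu₃
  have hd3 : HasDerivAt (fun x =>
      f x * deriv (deriv (deriv g)) x - deriv (deriv (deriv f)) x * g x -
        (ft x * deriv (deriv (deriv gt)) x - deriv (deriv (deriv ft)) x * gt x))
      ((deriv f t * deriv (deriv (deriv g)) t + f t * deriv (deriv (deriv (deriv g))) t
        - (deriv (deriv (deriv (deriv f))) t * g t + deriv (deriv (deriv f)) t * deriv g t))
      - (deriv ft t * deriv (deriv (deriv gt)) t + ft t * deriv (deriv (deriv (deriv gt))) t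
        - (deriv (deriv (deriv (deriv ft))) t * gt t
            + deriv (deriv (deriv ft)) t * deriv gt t))) t := by
    exact ((hf0.hasDerivAt.mul hg3.hasDerivAt).sub
      (hf3.hasDerivAt.mul hg0.hasDerivAt)).sub
      ((hp0.hasDerivAt.mul hq3.hasDerivAt).sub
      (hp3.hasDerivAt.mul hq0.hasDerivAt))
  refine ⟨by have := key2 t ht; linarith, by have := key34 t ht; linarith, ?_, ?_⟩
  · rw [hd3.deriv]
    have := key3v t ht
    linarith
  -- last claim
  · -- HasDerivAt for Δu₅
    have hd5 : HasDerivAt (fun x =>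
        deriv f x * deriv (deriv (deriv g)) x - deriv (deriv (deriv f)) x * deriv g x -
          (deriv ft x * deriv (deriv (deriv gt)) x - deriv (deriv (deriv ft)) x * deriv gt x))
        ((deriv (deriv f) t * deriv (deriv (deriv g)) t
            + deriv f t * deriv (deriv (deriv (deriv g))) t
          - (deriv (deriv (deriv (deriv f))) t * deriv g t
            + deriv (deriv (deriv f)) t * deriv (deriv g) t))
        - (deriv (deriv ft) t * deriv (deriv (deriv gt)) t
            + deriv ft t * deriv (deriv (deriv (deriv gt))) t
          - (deriv (deriv (deriv (deriv ft))) t * deriv gt t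
            + deriv (deriv (deriv ft)) t * deriv (deriv gt) t))) t := by
      exact ((hf1.hasDerivAt.mul hg3.hasDerivAt).sub
        (hf3.hasDerivAt.mul hg1.hasDerivAt)).sub
        ((hp1.hasDerivAt.mul hq3.hasDerivAt).sub
        (hp3.hasDerivAt.mul hq1.hasDerivAt))
    have hdr : HasDerivAt (fun x =>
        1 / 2 * (a₃ x * (f x * deriv (deriv (deriv g)) x - deriv (deriv (deriv f)) x * g x -
          (ft x * deriv (deriv (deriv gt)) x - deriv (deriv (deriv ft)) x * gt x))))
        (1 / 2 * (deriv a₃ t *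
          (f t * deriv (deriv (deriv g)) t - deriv (deriv (deriv f)) t * g t -
            (ft t * deriv (deriv (deriv gt)) t - deriv (deriv (deriv ft)) t * gt t))
          + a₃ t *
          ((deriv f t * deriv (deriv (deriv g)) t + f t * deriv (deriv (deriv (deriv g))) t
            - (deriv (deriv (deriv (deriv f))) t * g t
                + deriv (deriv (deriv f)) t * deriv g t))
          - (deriv ft t * deriv (deriv (deriv gt)) t + ft t * deriv (deriv (deriv (deriv gt))) t
            - (deriv (deriv (deriv (deriv ft))) t * gt t
                + deriv (deriv (deriv ft)) t * deriv gt t))))) t := by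
      exact (ha3d.hasDerivAt.mul hd3).const_mul (1 / 2)
    have heq5 := (Filter.eventuallyEq_of_mem (hS.mem_nhds ht)
      (fun x hx => key5 x hx)).deriv_eq
    rw [hd5.deriv, hdr.deriv] at heq5
    have K3 := key3v t ht
    have K5 := key5 t ht
    have K34 := key34 t ht
    have K2 := key2 t ht
    have K1 := hu1 t ht
    have Pf := hfsol t ht
    have Pg := hgsol t ht
    have Pp := hftsol t ht
    have Pq := hgtsol t ht
    linear_combination 2 * heq5 - 2 * deriv f t * Pg + 2 * deriv g t * Pf
      + 2 * deriv ft t * Pq - 2 * deriv gt t * Pp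
      + a₃ t * K3 + 2 * a₃ t * K5 + 2 * a₂ t * K34 - 2 * a₀ t * K1
end
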